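/- arXiv:2007.07464 — 5 statements merged into one kernel-verified Lean document; each statement's English description precedes it below -/
import Mathlib

section
/- In the graph G_k = K_k ∨ P_{2k+1}, the vertex ordering u_1 ≺ u_2 ≺ ⋯ ≺ u_k ≺ v_1 ≺ v_2 ≺ ⋯ ≺ v_k ≺ x_1 ≺ x_2 ≺ ⋯ ≺ x_k ≺ z is a simple elimination ordering; hence G_k is strongly chordal. -/
def Gk (k : ℕ) : SimpleGraph (Fin (3 * k + 1)) where
  Adj a b := a ≠ b ∧ (a.val < k ∨ b.val < k ∨ a.val + 1 = b.val ∨ b.val + 1 = a.val)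
  symm := ⟨by rintro a b ⟨h1, h2⟩; exact ⟨h1.symm, by tauto⟩⟩
  loopless := ⟨by rintro a ⟨h, _⟩; exact h rfl⟩

def xv (k : ℕ) (i : Fin k) : Fin (3 * k + 1) := ⟨i.val, by have := i.isLt; omega⟩
def uv (k : ℕ) (i : Fin k) : Fin (3 * k + 1) := ⟨k + i.val, by have := i.isLt; omega⟩
def zv (k : ℕ) : Fin (3 * k + 1) := ⟨2 * k, by omega⟩
def vv (k : ℕ) (i : Fin k) : Fin (3 * k + 1) := ⟨3 * k - i.val, by omega⟩

/-- The closed neighbourhood of `v` inside the induced subgraph on `S`: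
`{u ∈ S | u = v ∨ u ~ v}`. -/
def closedNbhdIn {V : Type*} (G : SimpleGraph V) (S : Set V) (v : V) : Set V :=
  {u | u ∈ S ∧ (u = v ∨ G.Adj v u)}

/-- `v` is a simple vertex of the induced subgraph of `G` on `S`: the closed
neighbourhoods (within `S`) of the vertices in its closed neighbourhood are
linearly ordered by inclusion. -/
def IsSimpleIn {V : Type*} (G : SimpleGraph V) (S : Set V) (v : V) : Prop :=
  v ∈ S ∧ ∀ x ∈ closedNbhdIn G S v, ∀ y ∈ closedNbhdIn G S v,
    closedNbhdIn G S x ⊆ closedNbhdIn G S y ∨ closedNbhdIn G S y ⊆ closedNbhdIn G S x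

/-- A simple elimination ordering of `G` : a listing `v_1 ≺ ⋯ ≺ v_n` of all vertices
such that each `v_i` is simple in the subgraph induced on `{v_i, ..., v_n}`. -/
def IsSimpleElimOrdering {V : Type*} (G : SimpleGraph V) (l : List V) : Prop :=
  l.Nodup ∧ (∀ v, v ∈ l) ∧
    ∀ i (h : i < l.length), IsSimpleIn G {v | v ∈ l.drop i} (l.get ⟨i, h⟩)

/-- A graph is chordal if it has no induced cycle of length at least 4. -/
def IsChordal {V : Type*} (G : SimpleGraph V) : Prop :=
  ∀ n, 4 ≤ n → IsEmpty (SimpleGraph.cycleGraph n ↪g G)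

/-- A graph is strongly chordal if it is chordal and every even cycle of length at
least 6 has a chord joining two vertices at odd distance from each other along the
cycle. -/
def IsStronglyChordal {V : Type*} (G : SimpleGraph V) : Prop :=
  IsChordal G ∧ ∀ (v : V) (c : G.Walk v v), c.IsCycle → 6 ≤ c.length → Even c.length →
    ∃ i j, i < j ∧ j < c.length ∧ Odd (j - i) ∧ j - i ≠ 1 ∧ ¬(i = 0 ∧ j = c.length - 1) ∧
      G.Adj (c.getVert i) (c.getVert j)

/-- The ordering `u_1 ≺ ⋯ ≺ u_k ≺ v_1 ≺ ⋯ ≺ v_k ≺ x_1 ≺ ⋯ ≺ x_k ≺ z`. -/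
def hendryOrdering (k : ℕ) : List (Fin (3 * k + 1)) :=
  (List.ofFn fun i : Fin k => uv k i) ++ (List.ofFn fun i : Fin k => vv k i) ++
    (List.ofFn fun i : Fin k => xv k i) ++ [zv k]

lemma hendry_length (k : ℕ) : (hendryOrdering k).length = 3*k+1 := by
  simp [hendryOrdering]; ring

lemma hendry_getElem (k j : ℕ) (h' : j < (hendryOrdering k).length) :
    ((hendryOrdering k)[j]).val =
      if j < k then k + j else if j < 2*k then 4*k - j
      else if j < 3*k then j - 2*k else 2*k := by
  have hj : j < 3*k+1 := by rwa [hendry_length] at h'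
  simp only [hendryOrdering]
  rcases Nat.lt_or_ge j k with h1 | h1
  · rw [if_pos h1]
    rw [List.getElem_append_left (by simp; omega),
        List.getElem_append_left (by simp; omega),
        List.getElem_append_left (by simpa using h1)]
    simp [uv]
  · rw [if_neg (by omega)]
    rcases Nat.lt_or_ge j (2*k) with h2 | h2
    · rw [if_pos h2]
      rw [List.getElem_append_left (by simp; omega),
          List.getElem_append_left (by simp; omega),
          List.getElem_append_right (by simpa using h1)]
      simp [vv]
      omega
    · rw [if_neg (by omega)]
      rcases Nat.lt_or_ge j (3*k) with h3 | h3
      · rw [if_pos h3]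
        rw [List.getElem_append_left (by simp; omega),
            List.getElem_append_right (by simp; omega)]
        simp [xv]
        omega
      · rw [if_neg (by omega)]
        rw [List.getElem_append_right (by simp; omega)]
        simp [zv]

def Scond (k i a : ℕ) : Prop :=
  (a < k ∧ i - 2*k ≤ a) ∨ (i ≤ k ∧ k + i ≤ a ∧ a ≤ 3*k) ∨
  (k ≤ i ∧ i ≤ 2*k ∧ 2*k ≤ a ∧ a + i ≤ 4*k) ∨ a = 2*k

lemma mem_drop_iff (k i : ℕ) (hk : 1 ≤ k) (hi : i ≤ 3*k) (v : Fin (3*k+1)) :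
    v ∈ (hendryOrdering k).drop i ↔ Scond k i v.val := by
  rw [List.mem_iff_getElem]
  constructor
  · rintro ⟨m, hm, he⟩
    rw [List.length_drop, hendry_length] at hm
    rw [List.getElem_drop] at he
    have hval : ((hendryOrdering k)[i + m]'(by rw [hendry_length]; omega)).val = v.val := by
      rw [he]
    rw [hendry_getElem] at hval
    unfold Scond
    split_ifs at hval <;> omega
  · intro hS
    have hv3 : v.val ≤ 3*k := by omega
    -- choose the index j of v in the list
    have : ∃ j, i ≤ j ∧ j < 3*k+1 ∧
        (if j < k then k + j else if j < 2*k then 4*k - j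
         else if j < 3*k then j - 2*k else 2*k) = v.val := by
      unfold Scond at hS
      rcases hS with ⟨h1, h2⟩ | ⟨h1, h2, h3⟩ | ⟨h1, h2, h3, h4⟩ | h1
      · exact ⟨2*k + v.val, by omega, by omega, by split_ifs <;> omega⟩
      · rcases Nat.lt_or_ge v.val (2*k) with h | h
        · exact ⟨v.val - k, by omega, by omega, by split_ifs <;> omega⟩
        · rcases Nat.eq_or_lt_of_le h with h' | h'
          · exact ⟨3*k, by omega, by omega, by split_ifs <;> omega⟩
          · exact ⟨4*k - v.val, by omega, by omega, by split_ifs <;> omega⟩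
      · rcases Nat.eq_or_lt_of_le h3 with h' | h'
        · exact ⟨3*k, by omega, by omega, by split_ifs <;> omega⟩
        · exact ⟨4*k - v.val, by omega, by omega, by split_ifs <;> omega⟩
      · exact ⟨3*k, by omega, by omega, by split_ifs <;> omega⟩
    obtain ⟨j, hij, hj, hval⟩ := this
    refine ⟨j - i, by rw [List.length_drop, hendry_length]; omega, ?_⟩
    rw [List.getElem_drop]
    apply Fin.ext
    rw [hendry_getElem k (i + (j - i)) (by rw [hendry_length]; omega)]
    have : i + (j - i) = j := by omega
    rw [this, hval]

def Qc (k i x a : ℕ) : Prop :=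
  Scond k i a ∧ (a = x ∨ x < k ∨ a < k ∨ x + 1 = a ∨ a + 1 = x)

lemma mem_closed_iff (k i : ℕ) (hk : 1 ≤ k) (hi : i ≤ 3*k) (x u : Fin (3*k+1)) :
    u ∈ closedNbhdIn (Gk k) {w | w ∈ (hendryOrdering k).drop i} x ↔
      Qc k i x.val u.val := by
  unfold closedNbhdIn Qc Gk
  simp only [Set.mem_setOf_eq, mem_drop_iff k i hk hi]
  show _ ↔ _
  constructor
  · rintro ⟨hS, h | ⟨hne, h⟩⟩
    · exact ⟨hS, Or.inl (by rw [h])⟩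
    · exact ⟨hS, by tauto⟩
  · rintro ⟨hS, hcond⟩
    refine ⟨hS, ?_⟩
    rcases eq_or_ne u.val x.val with h | h
    · exact Or.inl (Fin.ext h)
    · refine Or.inr ⟨fun hxy => h (by rw [hxy]), by omega⟩


lemma Scond_p1 (k i a : ℕ) (hi : i ≤ k) : Scond k i a ↔ (a < k ∨ (k + i ≤ a ∧ a ≤ 3*k)) := by
  unfold Scond; omega
lemma Scond_p2 (k i a : ℕ) (h1 : k ≤ i) (h2 : i ≤ 2*k) :
    Scond k i a ↔ (a < k ∨ (2*k ≤ a ∧ a + i ≤ 4*k)) := by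
  unfold Scond; omega
lemma Scond_p3 (k i a : ℕ) (h1 : 2*k ≤ i) (h2 : i ≤ 3*k) :
    Scond k i a ↔ ((i - 2*k ≤ a ∧ a < k) ∨ a = 2*k) := by
  unfold Scond; omega

lemma key_p1 (k i x y a b : ℕ) (hk : 1 ≤ k) (hi : i < k)
    (hx : Qc k i (k+i) x) (hy : Qc k i (k+i) y)
    (ha : Qc k i x a) (hna : ¬ Qc k i y a)
    (hb : Qc k i y b) (hnb : ¬ Qc k i x b) : False := by
  unfold Qc at *
  rw [Scond_p1 k i _ (by omega)] at hx hy ha hb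
  rw [show (¬ (Scond k i a ∧ _)) ↔ _ from by rw [Scond_p1 k i a (by omega)]] at hna
  rw [show (¬ (Scond k i b ∧ _)) ↔ _ from by rw [Scond_p1 k i b (by omega)]] at hnb
  omega

lemma key_p2 (k i x y a b : ℕ) (hk : 1 ≤ k) (h1 : k ≤ i) (h2 : i < 2*k)
    (hx : Qc k i (4*k-i) x) (hy : Qc k i (4*k-i) y)
    (ha : Qc k i x a) (hna : ¬ Qc k i y a)
    (hb : Qc k i y b) (hnb : ¬ Qc k i x b) : False := by
  unfold Qc at *
  rw [Scond_p2 k i _ (by omega) (by omega)] at hx hy ha hb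
  rw [show (¬ (Scond k i a ∧ _)) ↔ _ from by rw [Scond_p2 k i a (by omega) (by omega)]] at hna
  rw [show (¬ (Scond k i b ∧ _)) ↔ _ from by rw [Scond_p2 k i b (by omega) (by omega)]] at hnb
  omega

lemma key_p3 (k i v x y a b : ℕ) (hk : 1 ≤ k) (h1 : 2*k ≤ i) (h2 : i ≤ 3*k)
    (hv : (i < 3*k ∧ v = i - 2*k) ∨ (i = 3*k ∧ v = 2*k))
    (hx : Qc k i v x) (hy : Qc k i v y)
    (ha : Qc k i x a) (hna : ¬ Qc k i y a)
    (hb : Qc k i y b) (hnb : ¬ Qc k i x b) : False := by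
  unfold Qc at *
  rw [Scond_p3 k i _ (by omega) (by omega)] at hx hy ha hb
  rw [show (¬ (Scond k i a ∧ _)) ↔ _ from by rw [Scond_p3 k i a (by omega) (by omega)]] at hna
  rw [show (¬ (Scond k i b ∧ _)) ↔ _ from by rw [Scond_p3 k i b (by omega) (by omega)]] at hnb
  omega

lemma key_arith (k i v x y a b : ℕ) (hk : 1 ≤ k)
    (hvv : (i < k ∧ v = k + i) ∨ (k ≤ i ∧ i < 2*k ∧ v = 4*k - i) ∨
           (2*k ≤ i ∧ i < 3*k ∧ v = i - 2*k) ∨ (i = 3*k ∧ v = 2*k))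
    (hx : Qc k i v x) (hy : Qc k i v y)
    (ha : Qc k i x a) (hna : ¬ Qc k i y a)
    (hb : Qc k i y b) (hnb : ¬ Qc k i x b) : False := by
  rcases hvv with ⟨h1, h2⟩ | ⟨h1, h1', h2⟩ | ⟨h1, h1', h2⟩ | ⟨h1, h2⟩
  · subst h2; exact key_p1 k i x y a b hk h1 hx hy ha hna hb hnb
  · subst h2; exact key_p2 k i x y a b hk h1 h1' hx hy ha hna hb hnb
  · exact key_p3 k i v x y a b hk h1 (by omega) (Or.inl ⟨h1', h2⟩) hx hy ha hna hb hnb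
  · exact key_p3 k i v x y a b hk (by omega) (by omega) (Or.inr ⟨h1, h2⟩) hx hy ha hna hb hnb

lemma hendry_nodup (k : ℕ) (hk : 1 ≤ k) : (hendryOrdering k).Nodup := by
  rw [List.nodup_iff_injective_get]
  rintro ⟨i, hi⟩ ⟨j, hj⟩ h
  simp only [List.get_eq_getElem] at h
  have hvi := hendry_getElem k i hi
  have hvj := hendry_getElem k j hj
  have hv : ((hendryOrdering k)[i]).val = ((hendryOrdering k)[j]).val := by rw [h]
  rw [hvi, hvj] at hv
  have hi' : i < 3*k+1 := by rwa [hendry_length] at hi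
  have hj' : j < 3*k+1 := by rwa [hendry_length] at hj
  apply Fin.ext
  simp only []
  split_ifs at hv <;> omega

lemma hendry_complete (k : ℕ) (hk : 1 ≤ k) (v : Fin (3*k+1)) : v ∈ hendryOrdering k := by
  have hvlt := v.isLt
  have := (mem_drop_iff k 0 hk (by omega) v).mpr (by unfold Scond; omega)
  rwa [List.drop_zero] at this

lemma getVert_eq_support_getElem {V : Type*} {G : SimpleGraph V} {u w : V} (p : G.Walk u w)
    (i : ℕ) (hi : i ≤ p.length) :
    p.getVert i = p.support[i]'(by rw [SimpleGraph.Walk.length_support]; omega) := by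
  induction p generalizing i with
  | nil =>
    simp at hi
    subst hi
    simp [SimpleGraph.Walk.getVert]
  | cons h q ih =>
    cases i with
    | zero => simp [SimpleGraph.Walk.getVert]
    | succ n =>
      simp only [SimpleGraph.Walk.getVert_cons_succ, SimpleGraph.Walk.support_cons]
      rw [ih n (by simpa using hi)]
      simp

lemma cycle_getVert_inj {V : Type*} {G : SimpleGraph V} {v : V} (c : G.Walk v v)
    (hc : c.IsCycle) {i j : ℕ} (hij : i < j) (hj : j < c.length) :
    c.getVert i ≠ c.getVert j := by
  have hnd := hc.support_nodup
  have hlen : c.support.length = c.length + 1 := SimpleGraph.Walk.length_support c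
  have htl : c.support.tail.length = c.length := by
    rw [List.length_tail, hlen]; omega
  have hget : ∀ m : ℕ, (hm : m < c.length) → c.getVert (m+1) = c.support.tail[m]'(by omega) := by
    intro m hm
    rw [List.getElem_tail]
    exact getVert_eq_support_getElem c (m+1) (by omega)
  rcases Nat.eq_zero_or_pos i with rfl | hi
  · -- getVert 0 = v = getVert length
    intro he
    have h0 : c.getVert 0 = c.getVert c.length := by
      rw [SimpleGraph.Walk.getVert_zero, SimpleGraph.Walk.getVert_length]
    have hL : 1 ≤ c.length := by omega
    have e1 : c.support.tail[j-1]'(by omega) = c.support.tail[c.length-1]'(by omega) := by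
      rw [← hget (j-1) (by omega), ← hget (c.length-1) (by omega)]
      have : j - 1 + 1 = j := by omega
      rw [this]
      have : c.length - 1 + 1 = c.length := by omega
      rw [this, ← h0, he]
    have := (hnd.getElem_inj_iff).mp e1
    omega
  · intro he
    have e1 : c.support.tail[i-1]'(by omega) = c.support.tail[j-1]'(by omega) := by
      rw [← hget (i-1) (by omega), ← hget (j-1) (by omega)]
      have h1 : i - 1 + 1 = i := by omega
      have h2 : j - 1 + 1 = j := by omega
      rw [h1, h2, he]
    have := (hnd.getElem_inj_iff).mp e1
    omega

lemma gk_adj {k : ℕ} {a b : Fin (3*k+1)} : (Gk k).Adj a b ↔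
    (a ≠ b ∧ (a.val < k ∨ b.val < k ∨ a.val + 1 = b.val ∨ b.val + 1 = a.val)) := Iff.rfl

lemma no_high_cycle (k : ℕ) {v : Fin (3*k+1)} (c : (Gk k).Walk v v) (hc : c.IsCycle)
    (hall : ∀ i, i ≤ c.length → k ≤ (c.getVert i).val) : False := by
  have hL : 3 ≤ c.length := hc.three_le_length
  obtain ⟨i₀, hi₀mem, hmax⟩ := Finset.exists_max_image (Finset.range c.length)
    (fun i => (c.getVert i).val) ⟨0, by simp; omega⟩
  rw [Finset.mem_range] at hi₀mem
  have hmax' : ∀ i, i < c.length → (c.getVert i).val ≤ (c.getVert i₀).val := by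
    intro i hi; exact hmax i (Finset.mem_range.mpr hi)
  have hstep : ∀ i, i < c.length → (c.getVert i).val + 1 = (c.getVert (i+1)).val ∨
      (c.getVert (i+1)).val + 1 = (c.getVert i).val := by
    intro i hi
    have := c.adj_getVert_succ hi
    rw [gk_adj] at this
    have h1 := hall i (by omega)
    have h2 := hall (i+1) (by omega)
    omega
  have h0L : c.getVert 0 = c.getVert c.length := by
    rw [SimpleGraph.Walk.getVert_zero, SimpleGraph.Walk.getVert_length]
  -- two neighbours of the max vertex
  rcases Nat.eq_zero_or_pos i₀ with rfl | hpos
  · have ha := hstep 0 (by omega)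
    rw [show (0:ℕ)+1 = 1 from rfl] at ha
    have hb := hstep (c.length - 1) (by omega)
    rw [show c.length - 1 + 1 = c.length from by omega, ← h0L] at hb
    have e1 := hmax' 1 (by omega)
    have e2 := hmax' (c.length - 1) (by omega)
    have : c.getVert 1 = c.getVert (c.length - 1) := Fin.ext (by omega)
    exact cycle_getVert_inj c hc (by omega) (by omega) this
  · rcases Nat.lt_or_ge i₀ (c.length - 1) with hlt | hge
    · have ha := hstep (i₀ - 1) (by omega)
      rw [show i₀ - 1 + 1 = i₀ from by omega] at ha
      have hb := hstep i₀ (by omega)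
      have e1 := hmax' (i₀ - 1) (by omega)
      have e2 := hmax' (i₀ + 1) (by omega)
      have : c.getVert (i₀ - 1) = c.getVert (i₀ + 1) := Fin.ext (by omega)
      exact cycle_getVert_inj c hc (by omega) (by omega) this
    · have hi₀ : i₀ = c.length - 1 := by omega
      subst hi₀
      have ha := hstep (c.length - 2) (by omega)
      rw [show c.length - 2 + 1 = c.length - 1 from by omega] at ha
      have hb := hstep (c.length - 1) (by omega)
      rw [show c.length - 1 + 1 = c.length from by omega, ← h0L] at hb
      have e1 := hmax' (c.length - 2) (by omega)
      have e2 := hmax' 0 (by omega)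
      have : c.getVert 0 = c.getVert (c.length - 2) := Fin.ext (by omega)
      exact cycle_getVert_inj c hc (by omega) (by omega) this

lemma chordal_Gk (k : ℕ) : ∀ n, 4 ≤ n → IsEmpty (SimpleGraph.cycleGraph n ↪g Gk k) := by
  intro n hn
  constructor
  intro f
  obtain ⟨m, rfl⟩ : ∃ m, n = m + 4 := ⟨n - 4, by omega⟩
  have val2 : ((2 : Fin (m+4))).val = 2 := rfl
  have val1 : ((1 : Fin (m+4))).val = 1 := rfl
  have val2' : (2 : Fin (m+4)) ≠ 0 := by
    intro h
    have := congrArg Fin.val h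
    rw [val2] at this
    simp at this
  have neg2 : (-2 : Fin (m+4)) = ⟨m+2, by omega⟩ := by
    symm
    apply eq_neg_of_add_eq_zero_left
    apply Fin.ext
    rw [Fin.add_def]
    show (m + 2 + 2) % (m + 4) = 0
    rw [show m + 2 + 2 = m + 4 from by omega, Nat.mod_self]
  by_cases hex : ∃ i, (f i).val < k
  · obtain ⟨i, hik⟩ := hex
    have hne : i + 2 ≠ i := by
      intro h
      exact val2' (add_eq_left.mp h)
    have hnadj : ¬ (SimpleGraph.cycleGraph (m+4)).Adj i (i+2) := by
      rw [SimpleGraph.cycleGraph_adj]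
      push_neg
      constructor
      · rw [show i - (i+2) = -2 from by rw [sub_add_cancel_left], neg2]
        intro h
        have h2 := congrArg Fin.val h
        rw [val1] at h2
        simp only [] at h2
        omega
      · rw [show i + 2 - i = 2 from by rw [add_sub_cancel_left]]
        intro h
        have h2 := congrArg Fin.val h
        rw [val2, val1] at h2
        omega
    apply hnadj
    rw [← f.map_rel_iff]
    rw [gk_adj]
    exact ⟨fun h => hne (f.injective h).symm, Or.inl hik⟩
  · push_neg at hex
    obtain ⟨i₀, hmax⟩ := Finite.exists_max (fun i : Fin (m+4) => (f i).val)
    have h1 : (SimpleGraph.cycleGraph (m+4)).Adj i₀ (i₀+1) := by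
      rw [SimpleGraph.cycleGraph_adj]
      right
      rw [add_sub_cancel_left]
    have h2 : (SimpleGraph.cycleGraph (m+4)).Adj (i₀-1) i₀ := by
      rw [SimpleGraph.cycleGraph_adj]
      right
      rw [sub_sub_cancel]
    have a1 := (gk_adj.mp (f.map_rel_iff.mpr h1)).2
    have a2 := (gk_adj.mp (f.map_rel_iff.mpr h2)).2
    have k1 := hex i₀
    have k2 := hex (i₀+1)
    have k3 := hex (i₀-1)
    have m1 := hmax (i₀+1)
    have m2 := hmax (i₀-1)
    have heq : f (i₀+1) = f (i₀-1) := Fin.ext (by omega)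
    have hi : i₀ + 1 = i₀ - 1 := f.injective heq
    have hcon : i₀ + 2 = i₀ := by
      rw [show (2:Fin (m+4)) = 1 + 1 from Fin.ext (by rw [Fin.val_add, val1, val2, Nat.mod_eq_of_lt (by omega)]), ← add_assoc, hi]; rw [sub_add_cancel]
    exact val2' (add_eq_left.mp hcon)

lemma chord_Gk (k : ℕ) (v : Fin (3*k+1)) (c : (Gk k).Walk v v) (hc : c.IsCycle)
    (h6 : 6 ≤ c.length) :
    ∃ i j, i < j ∧ j < c.length ∧ Odd (j - i) ∧ j - i ≠ 1 ∧ ¬(i = 0 ∧ j = c.length - 1) ∧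
      (Gk k).Adj (c.getVert i) (c.getVert j) := by
  by_cases hex : ∃ i, i < c.length ∧ (c.getVert i).val < k
  · obtain ⟨i, hiL, hik⟩ := hex
    rcases Nat.lt_or_ge (i+3) c.length with h | h
    · refine ⟨i, i+3, by omega, by omega, ⟨1, by omega⟩, by omega, by omega, ?_⟩
      exact ⟨cycle_getVert_inj c hc (by omega) (by omega), Or.inl hik⟩
    · refine ⟨i-3, i, by omega, by omega, ⟨1, by omega⟩, by omega, by omega, ?_⟩
      exact ⟨(cycle_getVert_inj c hc (show i-3 < i by omega) hiL).symm ∘ Eq.symm,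
        Or.inr (Or.inl hik)⟩
  · exfalso
    push_neg at hex
    apply no_high_cycle k c hc
    intro i hi
    rcases Nat.lt_or_ge i c.length with h | h
    · exact hex i h
    · have hieq : i = c.length := by omega
      rw [hieq, SimpleGraph.Walk.getVert_length]
      have h0 := hex 0 (by omega)
      rwa [SimpleGraph.Walk.getVert_zero] at h0

theorem stmt1 (k : ℕ) (hk : 1 ≤ k) :
    IsSimpleElimOrdering (Gk k) (hendryOrdering k) ∧ IsStronglyChordal (Gk k) := by
  constructor
  · refine ⟨hendry_nodup k hk, hendry_complete k hk, ?_⟩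
    intro i h
    have hi3 : i ≤ 3*k := by rw [hendry_length] at h; omega
    set vtx := (hendryOrdering k).get ⟨i, h⟩ with hv
    have hval : vtx.val = if i < k then k + i else if i < 2*k then 4*k - i
        else if i < 3*k then i - 2*k else 2*k := by
      rw [hv, List.get_eq_getElem]; exact hendry_getElem k i h
    have hvv : (i < k ∧ vtx.val = k + i) ∨ (k ≤ i ∧ i < 2*k ∧ vtx.val = 4*k - i) ∨
        (2*k ≤ i ∧ i < 3*k ∧ vtx.val = i - 2*k) ∨ (i = 3*k ∧ vtx.val = 2*k) := by
      split_ifs at hval <;> omega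
    constructor
    · show vtx ∈ {w | w ∈ (hendryOrdering k).drop i}
      rw [Set.mem_setOf_eq, mem_drop_iff k i hk hi3]
      unfold Scond
      omega
    · intro x hx y hy
      rw [mem_closed_iff k i hk hi3] at hx hy
      by_cases hXY : closedNbhdIn (Gk k) {w | w ∈ (hendryOrdering k).drop i} x ⊆
          closedNbhdIn (Gk k) {w | w ∈ (hendryOrdering k).drop i} y
      · exact Or.inl hXY
      · right
        obtain ⟨a, haX, haY⟩ := Set.not_subset.mp hXY
        intro b hbY
        by_contra hbX
        rw [mem_closed_iff k i hk hi3] at haX hbY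
        have haY' : ¬ Qc k i y.val a.val := fun hq => haY ((mem_closed_iff k i hk hi3 y a).mpr hq)
        have hbX' : ¬ Qc k i x.val b.val := fun hq => hbX ((mem_closed_iff k i hk hi3 x b).mpr hq)
        exact key_arith k i vtx.val x.val y.val a.val b.val hk hvv hx hy haX haY' hbY hbX'
  · exact ⟨chordal_Gk k, fun v c hc h6 _ => chord_Gk k v c hc h6⟩
end

section
/- For every k ≥ 1, the graph G_k = K_k ∨ P_{2k+1} has a Hamiltonian cycle that contains all heavy edges, i.e., all edges x_i u_i for 1 ≤ i ≤ k and all edges x_i v_i for 1 ≤ i ≤ k−1. -/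
open List in
section

/-! helpers -/

def chainEdges {α : Type*} : List α → List (Sym2 α)
  | a :: b :: l => s(a, b) :: chainEdges (b :: l)
  | _ => []

lemma chainEdges_sublist_cons {α : Type*} (a : α) (l : List α) :
    chainEdges l <+ chainEdges (a :: l) := by
  match l with
  | [] => simp [chainEdges]
  | b :: l' => exact List.sublist_cons_self _ _

lemma chainEdges_append_left {α : Type*} (s l : List α) :
    chainEdges l <+ chainEdges (s ++ l) := by
  induction s with
  | nil => simp
  | cons a s ih => exact ih.trans (chainEdges_sublist_cons a _)

lemma chainEdges_append_right {α : Type*} : ∀ (l t : List α), chainEdges l <+ chainEdges (l ++ t)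
  | [], t => by simp [chainEdges]
  | [a], t => by simp [chainEdges]
  | a :: b :: l, t => by
    show s(a,b) :: chainEdges (b :: l) <+ s(a,b) :: chainEdges (b :: l ++ t)
    exact (chainEdges_append_right (b :: l) t).cons₂ _

lemma mem_chainEdges_of_infix {α : Type*} {x y : α} {l : List α} (h : [x, y] <:+: l) :
    s(x, y) ∈ chainEdges l := by
  obtain ⟨s, t, rfl⟩ := h
  have h1 : chainEdges [x, y] <+ chainEdges ([x, y] ++ t) := chainEdges_append_right _ _
  have h2 : chainEdges ([x, y] ++ t) <+ chainEdges (s ++ ([x, y] ++ t)) :=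
    chainEdges_append_left _ _
  have : s(x, y) ∈ chainEdges [x, y] := by simp [chainEdges]
  rw [List.append_assoc]
  exact (h1.trans h2).subset this

lemma chainEdges_map {α β : Type*} (f : α → β) :
    ∀ l : List α, chainEdges (l.map f) = (chainEdges l).map (Sym2.map f)
  | [] => rfl
  | [a] => rfl
  | a :: b :: l => by
    show s(f a, f b) :: chainEdges ((b :: l).map f) = _
    rw [chainEdges_map f (b :: l)]; rfl

lemma chainEdges_last_aux {α : Type*} [DecidableEq α] {x y : α} :
    ∀ (M : List α), y ∉ M → s(x, y) ∈ chainEdges (M ++ [y]) → M.getLast? = some x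
  | [], _, h => by simp [chainEdges] at h
  | [c], hy, h => by
    simp only [List.cons_append, List.nil_append, chainEdges, List.mem_singleton] at h
    rw [Sym2.eq_iff] at h
    have hyc : y ≠ c := by simp at hy; tauto
    rcases h with ⟨rfl, -⟩ | ⟨rfl, rfl⟩
    · simp
    · exact absurd rfl hyc
  | c :: d :: M, hy, h => by
    simp only [List.cons_append, chainEdges] at h
    simp only [List.mem_cons] at hy
    push_neg at hy
    rcases List.mem_cons.mp h with h | h
    · rw [Sym2.eq_iff] at h
      rcases h with ⟨rfl, rfl⟩ | ⟨rfl, rfl⟩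
      · exact absurd rfl hy.2.1
      · exact absurd rfl hy.1
    · have := chainEdges_last_aux (x := x) (y := y) (d :: M) (by simp [hy.2.1, hy.2.2]) (by simpa using h)
      simpa using this

def walkOfChain {V : Type*} (G : SimpleGraph V) :
    ∀ (a b : V) (l : List V), List.Chain G.Adj a (l ++ [b]) → G.Walk a b
  | a, b, [], h => SimpleGraph.Walk.cons (List.isChain_pair.mp h) SimpleGraph.Walk.nil
  | a, b, c :: l, h =>
    SimpleGraph.Walk.cons (List.isChain_cons_cons.mp h).1
      (walkOfChain G c b l (show List.Chain G.Adj c (l ++ [b]) from (List.isChain_cons_cons.mp h).2))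

lemma walkOfChain_support {V : Type*} (G : SimpleGraph V) :
    ∀ (a b : V) (l : List V) (h : List.Chain G.Adj a (l ++ [b])),
      (walkOfChain G a b l h).support = a :: (l ++ [b])
  | a, b, [], h => rfl
  | a, b, c :: l, h => by
    show a :: (walkOfChain G c b l _).support = _
    rw [walkOfChain_support G c b l]; rfl

lemma walkOfChain_edges {V : Type*} (G : SimpleGraph V) :
    ∀ (a b : V) (l : List V) (h : List.Chain G.Adj a (l ++ [b])),
      (walkOfChain G a b l h).edges = chainEdges (a :: (l ++ [b]))
  | a, b, [], h => rfl
  | a, b, c :: l, h => by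
    show s(a, c) :: (walkOfChain G c b l _).edges = _
    rw [walkOfChain_edges G c b l]; rfl


/-! ### The ℕ-level cycle -/

def natR (k a b : ℕ) : Prop := a ≠ b ∧ (a < k ∨ b < k ∨ a + 1 = b ∨ b + 1 = a)

def blkL (k t : ℕ) : List ℕ :=
  if t % 2 = 0 then [3*k - (k-2-t), k-2-t, k + (k-2-t)]
  else [k + (k-2-t), k-2-t, 3*k - (k-2-t)]

def tlL (k m : ℕ) : List ℕ := (List.range m).flatMap (blkL k)

lemma tlL_succ (k m : ℕ) : tlL k (m+1) = tlL k m ++ blkL k m := by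
  simp [tlL, List.range_succ]

lemma mem_blkL {k t x : ℕ} :
    x ∈ blkL k t ↔ x = 3*k - (k-2-t) ∨ x = k-2-t ∨ x = k + (k-2-t) := by
  unfold blkL; split <;> simp <;> tauto

lemma mem_tlL {k : ℕ} (hk : 1 ≤ k) : ∀ {m : ℕ}, m ≤ k - 1 → ∀ x,
    (x ∈ tlL k m ↔ (k-1-m ≤ x ∧ x+1 ≤ k-1) ∨ (2*k-1-m ≤ x ∧ x+1 ≤ 2*k-1) ∨
      (2*k+2 ≤ x ∧ x ≤ 2*k+1+m))
  | 0, hm, x => by simp [tlL]; omega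
  | m+1, hm, x => by
    rw [tlL_succ, List.mem_append, mem_tlL hk (by omega) x, mem_blkL]
    omega

def lastV (k m : ℕ) : ℕ := if m = 0 then 2*k+1 else if (m-1) % 2 = 0 then 2*k-1-m else 2*k+1+m

lemma chain_tlL {k : ℕ} (hk : 1 ≤ k) : ∀ {m : ℕ}, m ≤ k - 1 →
    List.Chain' (natR k) ((2*k+1) :: tlL k m) ∧
      ((2*k+1) :: tlL k m).getLast? = some (lastV k m)
  | 0, hm => by simp [tlL, lastV, List.Chain']
  | m+1, hm => by
    obtain ⟨ih1, ih2⟩ := chain_tlL hk (m := m) (by omega)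
    have hm2 : m ≤ k - 2 := by omega
    have hchainblk : List.Chain' (natR k) (blkL k m) := by
      unfold blkL natR; split <;> simp [List.Chain'] <;> omega
    have hne : blkL k m ≠ [] := by unfold blkL; split <;> simp
    have hhead : (blkL k m).head? =
        some (if m % 2 = 0 then 3*k - (k-2-m) else k + (k-2-m)) := by
      unfold blkL; split <;> simp_all
    have hlast : (blkL k m).getLast? = some (lastV k (m+1)) := by
      rcases Nat.mod_two_eq_zero_or_one m with h | h <;>
        simp [blkL, lastV, h] <;> omega
    rw [tlL_succ]
    show List.Chain' (natR k) (((2*k+1) :: tlL k m) ++ blkL k m) ∧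
        (((2*k+1) :: tlL k m) ++ blkL k m).getLast? = some (lastV k (m+1))
    constructor
    · refine List.IsChain.append ih1 hchainblk ?_
      intro x hx y hy
      rw [ih2, Option.mem_def, Option.some.injEq] at hx
      rw [hhead, Option.mem_def, Option.some.injEq] at hy
      subst hx; subst hy
      unfold natR lastV; split_ifs <;> omega
    · rw [List.getLast?_append_of_ne_nil _ hne, hlast]

lemma nodup_blkL {k t : ℕ} (ht : t ≤ k - 2) (hk : 1 ≤ k) : (blkL k t).Nodup := by
  unfold blkL; split <;> simp <;> omega

lemma nodup_tlL {k : ℕ} (hk : 1 ≤ k) : ∀ {m : ℕ}, m ≤ k - 1 → (tlL k m).Nodup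
  | 0, hm => by simp [tlL]
  | m+1, hm => by
    rw [tlL_succ]
    refine List.Nodup.append (nodup_tlL hk (by omega)) (nodup_blkL (by omega) hk) ?_
    intro x hx hx'
    rw [mem_tlL hk (by omega) x] at hx
    rw [mem_blkL] at hx'
    omega

/-- The full cyclic vertex list (ℕ level): starts at `k-1` and ends back at `k-1`. -/
def natList (k : ℕ) : List ℕ := (2*k-1) :: 2*k :: (2*k+1) :: (tlL k (k-1) ++ [k-1])

def CL (k : ℕ) : List ℕ := (k-1) :: natList k

lemma mem_natList {k : ℕ} (hk : 1 ≤ k) (x : ℕ) :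
    x ∈ natList k ↔ (x = 2*k-1 ∨ x = 2*k ∨ x = 2*k+1 ∨ x ∈ tlL k (k-1) ∨ x = k-1) := by
  simp only [natList, List.mem_cons, List.mem_append, List.mem_singleton]
  tauto

lemma coverage {k : ℕ} (hk : 1 ≤ k) (x : ℕ) (hx : x < 3*k+1) : x ∈ natList k := by
  rw [mem_natList hk, mem_tlL hk le_rfl]
  omega

lemma bound_natList {k : ℕ} (hk : 1 ≤ k) (x : ℕ) (hx : x ∈ natList k) : x < 3*k+1 := by
  rw [mem_natList hk, mem_tlL hk le_rfl] at hx
  omega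

lemma nodup_natList {k : ℕ} (hk : 1 ≤ k) : (natList k).Nodup := by
  have htl := nodup_tlL hk (m := k-1) le_rfl
  have hmem := mem_tlL hk (m := k-1) le_rfl
  simp only [natList, List.nodup_cons, List.mem_cons, List.mem_append, List.mem_singleton,
    List.nodup_append, List.nodup_singleton, List.disjoint_singleton]
  refine ⟨?_, ?_, ?_, htl, ?_, ?_⟩ <;> simp [hmem] <;> omega

lemma lastV_top {k : ℕ} (hk : 1 ≤ k) :
    lastV k (k-1) = 2*k+1 ∨ lastV k (k-1) = k ∨ lastV k (k-1) = 3*k := by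
  unfold lastV; split_ifs <;> omega

lemma getLast_natList {k : ℕ} (hk : 1 ≤ k) :
    ((2*k-1) :: 2*k :: (2*k+1) :: tlL k (k-1)).getLast? = some (lastV k (k-1)) := by
  rw [List.getLast?_cons_cons, List.getLast?_cons_cons]
  exact (chain_tlL hk le_rfl).2

lemma chain_CL {k : ℕ} (hk : 1 ≤ k) : List.Chain' (natR k) (CL k) := by
  have h1 := (chain_tlL hk (m := k-1) le_rfl).1
  have : CL k = ((k-1) :: (2*k-1) :: 2*k :: (2*k+1) :: tlL k (k-1)) ++ [k-1] := by
    simp [CL, natList]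
  rw [this]
  refine List.IsChain.append ?_ (List.isChain_singleton _) ?_
  · refine List.isChain_cons_cons.mpr ⟨?_, List.isChain_cons_cons.mpr ⟨?_, List.isChain_cons_cons.mpr ⟨?_, h1⟩⟩⟩
    · exact ⟨by omega, by omega⟩
    · exact ⟨by omega, by omega⟩
    · exact ⟨by omega, by omega⟩
  · intro x hx y hy
    rw [List.getLast?_cons_cons, List.getLast?_cons_cons, List.getLast?_cons_cons,
      (chain_tlL hk le_rfl).2, Option.mem_def, Option.some.injEq] at hx
    simp only [List.head?_cons, Option.mem_def, Option.some.injEq] at hy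
    subst hx; subst hy
    rcases lastV_top hk with h | h | h <;> rw [h] <;> exact ⟨by omega, by omega⟩

lemma chainEdges_infix {α : Type*} {l₁ l₂ : List α} (h : l₁ <:+: l₂) :
    chainEdges l₁ <+ chainEdges l₂ := by
  obtain ⟨s, t, rfl⟩ := h
  rw [List.append_assoc]
  exact (chainEdges_append_right l₁ t).trans (chainEdges_append_left s _)

lemma blk_infix {k : ℕ} : ∀ {m t : ℕ}, t < m → blkL k t <:+: tlL k m
  | m+1, t, ht => by
    rw [tlL_succ]
    rcases Nat.lt_succ_iff_lt_or_eq.mp ht with h | rfl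
    · exact (blk_infix h).trans (List.prefix_append _ _).isInfix
    · exact (List.suffix_append _ _).isInfix

lemma tlL_infix_CL {k : ℕ} : tlL k (k-1) <:+: CL k :=
  ⟨[k-1, 2*k-1, 2*k, 2*k+1], [k-1], by simp [CL, natList]⟩

lemma pair_infix_blk {k j : ℕ} (hj : j + 2 ≤ k) :
    s(j, k+j) ∈ chainEdges (blkL k (k-2-j)) ∧ s(j, 3*k-j) ∈ chainEdges (blkL k (k-2-j)) := by
  have h : k-2-(k-2-j) = j := by omega
  unfold blkL
  rw [h]
  split
  · refine ⟨mem_chainEdges_of_infix ⟨[3*k-j], [], by simp⟩, ?_⟩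
    rw [Sym2.eq_swap]
    exact mem_chainEdges_of_infix ⟨[], [k+j], by simp⟩
  · refine ⟨?_, mem_chainEdges_of_infix ⟨[k+j], [], by simp⟩⟩
    rw [Sym2.eq_swap]
    exact mem_chainEdges_of_infix ⟨[], [3*k-j], by simp⟩

lemma heavy_u_mem {k j : ℕ} (hk : 1 ≤ k) (hj : j < k) : s(j, k+j) ∈ chainEdges (CL k) := by
  by_cases hj2 : j + 2 ≤ k
  · have h2 : blkL k (k-2-j) <:+: CL k :=
      (blk_infix (by omega)).trans tlL_infix_CL
    exact (chainEdges_infix h2).subset (pair_infix_blk hj2).1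
  · have hj' : j = k - 1 := by omega
    have hkj : k + j = 2*k-1 := by omega
    subst hj'
    rw [hkj]
    exact mem_chainEdges_of_infix ⟨[], 2*k :: (2*k+1) :: (tlL k (k-1) ++ [k-1]), by
      simp [CL, natList]⟩

lemma heavy_v_mem {k j : ℕ} (hj : j + 2 ≤ k) : s(j, 3*k-j) ∈ chainEdges (CL k) := by
  have h2 : blkL k (k-2-j) <:+: CL k := (blk_infix (by omega)).trans tlL_infix_CL
  exact (chainEdges_infix h2).subset (pair_infix_blk hj).2

lemma lastV_ne {k : ℕ} (hk : 1 ≤ k) : lastV k (k-1) ≠ 2*k-1 := by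
  unfold lastV; split_ifs <;> omega

end

/-- The set of heavy edges `A_k = {x_i u_i : 1 ≤ i ≤ k} ∪ {x_i v_i : 1 ≤ i ≤ k-1}`. -/
def heavyEdges (k : ℕ) : Set (Sym2 (Fin (3 * k + 1))) :=
  {e | (∃ i : Fin k, e = s(xv k i, uv k i)) ∨
    (∃ i : Fin (k - 1), e = s(xv k (i.castLE (Nat.sub_le k 1)), vv k (i.castLE (Nat.sub_le k 1))))}

set_option maxHeartbeats 1600000

/-- stmt2 : heavy Hamiltonian cycle -/
theorem stmt2 (k : ℕ) (hk : 1 ≤ k) :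
    ∃ (a : Fin (3 * k + 1)) (c : (Gk k).Walk a a), c.IsHamiltonianCycle ∧
      ∀ e ∈ heavyEdges k, e ∈ c.edges := by
  have hbt : ∀ x ∈ tlL k (k-1), x < 3*k+1 := fun x hx => by
    rw [mem_tlL hk le_rfl] at hx; omega
  let aF : Fin (3*k+1) := ⟨k-1, by omega⟩
  let bF : Fin (3*k+1) := ⟨2*k-1, by omega⟩
  let zF : Fin (3*k+1) := ⟨2*k, by omega⟩
  let vF : Fin (3*k+1) := ⟨2*k+1, by omega⟩
  let TF : List (Fin (3*k+1)) :=
    (tlL k (k-1)).pmap (fun x hx => (⟨x, hx⟩ : Fin (3*k+1))) hbt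
  have hTF : TF.map Fin.val = tlL k (k-1) := by
    show ((tlL k (k-1)).pmap (fun x hx => (⟨x, hx⟩ : Fin (3*k+1))) hbt).map Fin.val = _
    simp [List.map_pmap]
  have hmapNat' : (bF :: ((zF :: vF :: TF) ++ [aF])).map Fin.val = natList k := by
    simp only [List.map_cons, List.map_append, List.map_cons, List.map_nil, hTF]
    rfl
  have hmapC : (aF :: bF :: ((zF :: vF :: TF) ++ [aF])).map Fin.val = CL k := by
    rw [List.map_cons, hmapNat']
    rfl
  have hchainC := chain_CL hk
  have hchainF : List.Chain' (Gk k).Adj (aF :: bF :: ((zF :: vF :: TF) ++ [aF])) := by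
    rw [← hmapC] at hchainC
    unfold List.Chain' at hchainC
    rw [List.isChain_map] at hchainC
    refine hchainC.imp ?_
    rintro a b ⟨h1, h2⟩
    exact ⟨fun h => h1 (by rw [h]), h2⟩
  have hchain : List.Chain (Gk k).Adj bF ((zF :: vF :: TF) ++ [aF]) := List.IsChain.tail hchainF
  have hab : (Gk k).Adj aF bF := (List.isChain_cons_cons.mp hchainF).1
  let p := walkOfChain (Gk k) bF aF (zF :: vF :: TF) hchain
  have hsupp : p.support = bF :: ((zF :: vF :: TF) ++ [aF]) :=
    walkOfChain_support (Gk k) bF aF (zF :: vF :: TF) hchain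
  have hedges : p.edges = chainEdges (bF :: ((zF :: vF :: TF) ++ [aF])) :=
    walkOfChain_edges (Gk k) bF aF (zF :: vF :: TF) hchain
  have hnodup : (bF :: ((zF :: vF :: TF) ++ [aF])).Nodup :=
    List.Nodup.of_map Fin.val (by rw [hmapNat']; exact nodup_natList hk)
  let w : (Gk k).Walk aF aF := SimpleGraph.Walk.cons hab p
  have hwedges : w.edges = chainEdges (aF :: bF :: ((zF :: vF :: TF) ++ [aF])) := by
    show (SimpleGraph.Walk.cons hab p).edges = _
    rw [SimpleGraph.Walk.edges_cons, hedges]; rfl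
  have hnotmem : s(aF, bF) ∉ p.edges := by
    intro hmem
    rw [hedges] at hmem
    have hm2 : Sym2.map Fin.val s(aF, bF) ∈
        (chainEdges (bF :: ((zF :: vF :: TF) ++ [aF]))).map (Sym2.map Fin.val) :=
      List.mem_map_of_mem hmem
    rw [← chainEdges_map, hmapNat'] at hm2
    rw [Sym2.map_pair_eq] at hm2
    have hform : natList k = ((2*k-1) :: 2*k :: (2*k+1) :: tlL k (k-1)) ++ [k-1] := by
      simp [natList]
    rw [hform] at hm2
    have hy : (k-1 : ℕ) ∉ ((2*k-1) :: 2*k :: (2*k+1) :: tlL k (k-1)) := by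
      intro hcon
      simp only [List.mem_cons, mem_tlL hk le_rfl] at hcon
      omega
    have hax : (aF.val : ℕ) = k - 1 := rfl
    have hbx : (bF.val : ℕ) = 2*k - 1 := rfl
    rw [hax, hbx, Sym2.eq_swap] at hm2
    have hlastx := chainEdges_last_aux (x := 2*k-1) (y := k-1) _ hy hm2
    rw [getLast_natList hk] at hlastx
    exact lastV_ne hk (Option.some.injEq _ _ ▸ (by simpa using hlastx))
  have hcycle : w.IsCycle := by
    refine (SimpleGraph.Walk.cons_isCycle_iff p hab).mpr ⟨?_, hnotmem⟩
    exact SimpleGraph.Walk.IsPath.mk' (by rw [hsupp]; exact hnodup)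
  have hlift : ∀ (x y : ℕ) (hx : x < 3*k+1) (hy : y < 3*k+1), s(x,y) ∈ chainEdges (CL k) →
      s((⟨x,hx⟩ : Fin (3*k+1)), ⟨y,hy⟩) ∈ w.edges := by
    intro x y hx hy hmem
    rw [hwedges]
    rw [← hmapC, chainEdges_map] at hmem
    obtain ⟨e, he, hee⟩ := List.mem_map.mp hmem
    revert he hee
    induction e using Sym2.ind with
    | _ pp qq =>
      intro he hee
      rw [Sym2.map_pair_eq, Sym2.eq_iff] at hee
      rcases hee with ⟨h1, h2⟩ | ⟨h1, h2⟩
      · obtain rfl : pp = ⟨x, hx⟩ := Fin.ext h1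
        obtain rfl : qq = ⟨y, hy⟩ := Fin.ext h2
        exact he
      · obtain rfl : pp = ⟨y, hy⟩ := Fin.ext h1
        obtain rfl : qq = ⟨x, hx⟩ := Fin.ext h2
        rw [Sym2.eq_swap]
        exact he
  refine ⟨aF, w, ?_, ?_⟩
  · rw [SimpleGraph.Walk.isHamiltonianCycle_iff_isCycle_and_support_count_tail_eq_one]
    refine ⟨hcycle, fun v => ?_⟩
    show ((SimpleGraph.Walk.cons hab p).support.tail.count v = 1)
    rw [SimpleGraph.Walk.support_cons, List.tail_cons, hsupp]
    refine List.count_eq_one_of_mem hnodup ?_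
    have hv : (v : Fin (3*k+1)).val ∈ (bF :: ((zF :: vF :: TF) ++ [aF])).map Fin.val := by
      rw [hmapNat']; exact coverage hk v.val v.isLt
    obtain ⟨u, hu, hval⟩ := List.mem_map.mp hv
    rwa [show u = v from Fin.ext hval] at hu
  · rintro e (⟨i, rfl⟩ | ⟨i, rfl⟩)
    · exact hlift i.val (k + i.val) (by have := i.isLt; omega) (by have := i.isLt; omega)
        (heavy_u_mem hk i.isLt)
    · have hj : i.val + 2 ≤ k := by have := i.isLt; omega
      exact hlift i.val (3*k - i.val) (by omega) (by omega) (heavy_v_mem hj)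
end

section
/- For every k ≥ 2, the graph G_k = K_k ∨ P_{2k+1} contains a heavy cycle (a cycle using every heavy edge) whose vertex set is V(G_k) \ {v_k, z}, i.e., a cycle on all vertices except v_k and z that contains all heavy edges. -/
namespace Stmt3Aux
open SimpleGraph

variable {V : Type*}

def goWalk (G : SimpleGraph V) (f : ℕ → V) (n : ℕ)
    (hadj : ∀ i, i < n → G.Adj (f i) (f ((i+1) % n))) (i : ℕ) (h : i < n) :
    G.Walk (f i) (f 0) :=
  if hi : i + 1 = n then
    Walk.cons (by have h2 := hadj i h; rw [hi, Nat.mod_self] at h2; exact h2) Walk.nil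
  else
    Walk.cons (by have h2 := hadj i h; rw [Nat.mod_eq_of_lt (by omega)] at h2; exact h2)
      (goWalk G f n hadj (i+1) (by omega))
termination_by n - i

lemma goWalk_support (G : SimpleGraph V) (f : ℕ → V) (n : ℕ)
    (hadj : ∀ i, i < n → G.Adj (f i) (f ((i+1) % n))) (i : ℕ) (h : i < n) :
    (goWalk G f n hadj i h).support = (List.range' i (n - i)).map f ++ [f 0] := by
  rw [goWalk]
  split_ifs with hi
  · have h1 : n - i = 1 := by omega
    rw [h1]
    simp
  · rw [Walk.support_cons, goWalk_support G f n hadj (i+1) (by omega)]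
    have h1 : n - i = (n - (i+1)) + 1 := by omega
    rw [h1, List.range'_succ]
    simp
termination_by n - i

lemma goWalk_edges (G : SimpleGraph V) (f : ℕ → V) (n : ℕ)
    (hadj : ∀ i, i < n → G.Adj (f i) (f ((i+1) % n))) (i : ℕ) (h : i < n) :
    (goWalk G f n hadj i h).edges
      = (List.range' i (n - i)).map (fun t => s(f t, f ((t+1) % n))) := by
  rw [goWalk]
  split_ifs with hi
  · have h1 : n - i = 1 := by omega
    rw [h1]
    simp only [Walk.edges_cons, Walk.edges_nil, List.range'_one, List.map_cons, List.map_nil]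
    congr 2
    rw [hi, Nat.mod_self]
  · rw [Walk.edges_cons, goWalk_edges G f n hadj (i+1) (by omega)]
    have h1 : n - i = (n - (i+1)) + 1 := by omega
    rw [h1, List.range'_succ]
    simp only [List.map_cons]
    congr 2
    rw [Nat.mod_eq_of_lt (by omega)]
termination_by n - i

end Stmt3Aux

namespace Stmt3Aux
open SimpleGraph

lemma exists_cycle (G : SimpleGraph V) (f : ℕ → V) (n : ℕ) (hn : 3 ≤ n)
    (hadj : ∀ i, i < n → G.Adj (f i) (f ((i+1) % n)))
    (hinj : ∀ i, i < n → ∀ j, j < n → f i = f j → i = j) :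
    ∃ c : G.Walk (f 0) (f 0), c.IsCycle ∧
      (∀ x, x ∈ c.support ↔ ∃ t, t < n ∧ f t = x) ∧
      (∀ e, e ∈ c.edges ↔ ∃ t, t < n ∧ s(f t, f ((t+1) % n)) = e) := by
  have h0 : 0 < n := by omega
  refine ⟨goWalk G f n hadj 0 h0, ?_, ?_, ?_⟩
  · constructor
    · constructor
      · constructor
        rw [goWalk_edges]
        simp only [Nat.sub_zero]
        refine List.Nodup.map_on ?_ List.nodup_range'
        intro t1 ht1 t2 ht2 he
        simp only [List.mem_range'_1] at ht1 ht2
        rw [Sym2.eq_iff] at he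
        rcases he with ⟨e1, e2⟩ | ⟨e1, e2⟩
        · exact hinj t1 (by omega) t2 (by omega) e1
        · have a1 : t1 = (t2+1) % n := hinj t1 (by omega) _ (Nat.mod_lt _ (by omega)) e1
          have a2 : (t1+1) % n = t2 := hinj _ (Nat.mod_lt _ (by omega)) t2 (by omega) e2
          rcases Nat.lt_or_ge (t2+1) n with h | h
          · rw [Nat.mod_eq_of_lt h] at a1
            subst a1
            rcases Nat.lt_or_ge (t2+1+1) n with h2 | h2
            · rw [Nat.mod_eq_of_lt h2] at a2
              omega
            · have h3 : t2+1+1 = n := by omega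
              rw [h3, Nat.mod_self] at a2
              omega
          · have ht2n : t2 + 1 = n := by omega
            rw [ht2n, Nat.mod_self] at a1
            subst a1
            rw [Nat.mod_eq_of_lt (by omega)] at a2
            omega
      · rw [goWalk]
        split_ifs <;> simp
    · rw [goWalk_support]
      simp only [Nat.sub_zero]
      obtain ⟨m, hm⟩ : ∃ m, n = m + 1 := ⟨n-1, by omega⟩
      have hr : List.range' 0 n = 0 :: List.range' 1 (n-1) := by
        rw [hm, List.range'_succ]
        simp
      rw [hr]
      simp only [List.map_cons, List.cons_append, List.tail_cons]
      rw [List.nodup_append]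
      refine ⟨?_, List.nodup_singleton _, ?_⟩
      · refine List.Nodup.map_on ?_ List.nodup_range'
        intro t1 ht1 t2 ht2 he
        simp only [List.mem_range'_1] at ht1 ht2
        exact hinj t1 (by omega) t2 (by omega) he
      · intro a ha b hb hab; subst hab
        simp only [List.mem_singleton] at hb
        subst hb
        simp only [List.mem_map, List.mem_range'_1] at ha
        obtain ⟨t, ht, hft⟩ := ha
        have := hinj t (by omega) 0 (by omega) hft
        omega
  · intro x
    rw [goWalk_support]
    simp only [Nat.sub_zero, List.mem_append, List.mem_map, List.mem_range'_1,
      List.mem_singleton]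
    constructor
    · rintro (⟨t, ht, rfl⟩ | rfl)
      · exact ⟨t, by omega, rfl⟩
      · exact ⟨0, by omega, rfl⟩
    · rintro ⟨t, ht, rfl⟩
      exact Or.inl ⟨t, by omega, rfl⟩
  · intro e
    rw [goWalk_edges]
    simp only [Nat.sub_zero, List.mem_map, List.mem_range'_1]
    constructor
    · rintro ⟨t, ht, rfl⟩; exact ⟨t, by omega, rfl⟩
    · rintro ⟨t, ht, rfl⟩; exact ⟨t, by omega, rfl⟩

end Stmt3Aux

def fcyc (k t : ℕ) : ℕ :=
  if t = 0 then k - 1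
  else if t = 3*k - 2 then (if k % 2 = 0 then 3*k else k)
  else
    if ((t-1)/3) % 2 = 0 then
      (if (t-1) % 3 = 0 then 2*k-1-(t-1)/3
       else if (t-1) % 3 = 1 then 2*k-2-(t-1)/3 else k-2-(t-1)/3)
    else
      (if (t-1) % 3 = 0 then 2*k+1+(t-1)/3
       else if (t-1) % 3 = 1 then 2*k+2+(t-1)/3 else k-2-(t-1)/3)

def gcyc (k x : ℕ) : ℕ :=
  if x = k-1 then 0
  else if x < k then 3*k-3-3*x
  else if x < 2*k then (if x % 2 = 1 then 3*(2*k-1-x)+1 else 3*(2*k-2-x)+2)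
  else (if x % 2 = 0 then 3*(x-2*k-1)+1 else 3*(x-2*k-2)+2)

set_option maxHeartbeats 1000000 in
lemma g_spec (k x : ℕ) (hk : 2 ≤ k) (hx : x ≤ 3*k) (h1 : x ≠ 2*k) (h2 : x ≠ 2*k+1) :
    gcyc k x < 3*k - 1 ∧ fcyc k (gcyc k x) = x := by
  unfold gcyc
  split_ifs <;> (unfold fcyc; split_ifs <;> first | exact ‹False›.elim | omega)

set_option maxHeartbeats 1000000 in
lemma f_spec (k t : ℕ) (hk : 2 ≤ k) (ht : t < 3*k - 1) :
    fcyc k t ≤ 3*k ∧ fcyc k t ≠ 2*k ∧ fcyc k t ≠ 2*k+1 ∧ gcyc k (fcyc k t) = t := by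
  unfold fcyc
  split_ifs <;> (unfold gcyc; split_ifs <;> first | exact ‹False›.elim | omega)

set_option maxHeartbeats 1600000 in
lemma adj_spec (k t : ℕ) (hk : 2 ≤ k) (ht : t < 3*k-1) :
    fcyc k t ≠ fcyc k ((t+1) % (3*k-1)) ∧
      (fcyc k t < k ∨ fcyc k ((t+1) % (3*k-1)) < k ∨
        fcyc k t + 1 = fcyc k ((t+1) % (3*k-1)) ∨
        fcyc k ((t+1) % (3*k-1)) + 1 = fcyc k t) := by
  rcases Nat.lt_or_ge (t+1) (3*k-1) with h | h
  · rw [Nat.mod_eq_of_lt h]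
    unfold fcyc
    split_ifs <;> first | exact ‹False›.elim | omega
  · have h1 : t + 1 = 3*k-1 := by omega
    rw [h1, Nat.mod_self]
    unfold fcyc
    split_ifs <;> first | exact ‹False›.elim | omega

lemma fcyc_e0 (k : ℕ) (hk : 2 ≤ k) : fcyc k 0 = k - 1 := by
  unfold fcyc; simp

lemma fcyc_eA (k j : ℕ) (hk : 2 ≤ k) (hj : j ≤ k-2) (he : j % 2 = 0) :
    fcyc k (3*j+1) = 2*k-1-j := by
  unfold fcyc; split_ifs <;> first | exact ‹False›.elim | omega

lemma fcyc_eB (k j : ℕ) (hk : 2 ≤ k) (hj : j ≤ k-2) (he : j % 2 = 0) :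
    fcyc k (3*j+2) = 2*k-2-j := by
  unfold fcyc; split_ifs <;> first | exact ‹False›.elim | omega

lemma fcyc_eC (k j : ℕ) (hk : 2 ≤ k) (hj : j ≤ k-2) :
    fcyc k (3*j+3) = k-2-j := by
  unfold fcyc; split_ifs <;> first | exact ‹False›.elim | omega

lemma fcyc_eD (k j : ℕ) (hk : 2 ≤ k) (hj : j ≤ k-2) (he : j % 2 = 1) :
    fcyc k (3*j+1) = 2*k+1+j := by
  unfold fcyc; split_ifs <;> first | exact ‹False›.elim | omega

lemma fcyc_eE (k j : ℕ) (hk : 2 ≤ k) (hj : j ≤ k-2) (he : j % 2 = 1) :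
    fcyc k (3*j+2) = 2*k+2+j := by
  unfold fcyc; split_ifs <;> first | exact ‹False›.elim | omega

lemma fcyc_eF (k : ℕ) (hk : 2 ≤ k) :
    fcyc k (3*k-2) = if k % 2 = 0 then 3*k else k := by
  unfold fcyc; split_ifs <;> first | exact ‹False›.elim | omega

lemma heavy_u (k i : ℕ) (hk : 2 ≤ k) (hi : i < k) :
    ∃ t, t < 3*k-1 ∧ t+1 < 3*k-1 ∧
      ((fcyc k t = i ∧ fcyc k (t+1) = k+i) ∨ (fcyc k t = k+i ∧ fcyc k (t+1) = i)) := by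
  by_cases h1 : i = k-1
  · refine ⟨0, by omega, by omega, Or.inl ⟨by rw [fcyc_e0 k hk]; omega, ?_⟩⟩
    have := fcyc_eA k 0 hk (by omega) (by omega)
    simp only [Nat.mul_zero, Nat.zero_add] at this
    rw [show (0:ℕ)+1 = 1 by rfl, this]
    omega
  · set j := k-2-i with hj
    have hjk : j ≤ k-2 := by omega
    by_cases h2 : j % 2 = 0
    · refine ⟨3*j+2, by omega, by omega, Or.inr ⟨?_, ?_⟩⟩
      · rw [fcyc_eB k j hk hjk h2]; omega
      · rw [show 3*j+2+1 = 3*j+3 by omega, fcyc_eC k j hk hjk]; omega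
    · refine ⟨3*j+3, by omega, by omega, Or.inl ⟨?_, ?_⟩⟩
      · rw [fcyc_eC k j hk hjk]; omega
      · by_cases h3 : j = k-2
        · rw [show 3*j+3+1 = 3*k-2 by omega, fcyc_eF k hk]
          split_ifs <;> omega
        · rw [show 3*j+3+1 = 3*(j+1)+1 by omega,
            fcyc_eA k (j+1) hk (by omega) (by omega)]
          omega

lemma heavy_v (k i : ℕ) (hk : 2 ≤ k) (hi : i < k-1) :
    ∃ t, t < 3*k-1 ∧ t+1 < 3*k-1 ∧
      ((fcyc k t = i ∧ fcyc k (t+1) = 3*k-i) ∨ (fcyc k t = 3*k-i ∧ fcyc k (t+1) = i)) := by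
  set j := k-2-i with hj
  have hjk : j ≤ k-2 := by omega
  by_cases h2 : j % 2 = 1
  · refine ⟨3*j+2, by omega, by omega, Or.inr ⟨?_, ?_⟩⟩
    · rw [fcyc_eE k j hk hjk h2]; omega
    · rw [show 3*j+2+1 = 3*j+3 by omega, fcyc_eC k j hk hjk]; omega
  · refine ⟨3*j+3, by omega, by omega, Or.inl ⟨?_, ?_⟩⟩
    · rw [fcyc_eC k j hk hjk]; omega
    · by_cases h3 : j = k-2
      · rw [show 3*j+3+1 = 3*k-2 by omega, fcyc_eF k hk]
        split_ifs <;> omega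
      · rw [show 3*j+3+1 = 3*(j+1)+1 by omega,
          fcyc_eD k (j+1) hk (by omega) (by omega)]
        omega

def fF (k : ℕ) (t : ℕ) : Fin (3*k+1) := ⟨min (fcyc k t) (3*k), by omega⟩

lemma fF_val (k t : ℕ) (hk : 2 ≤ k) (ht : t < 3*k-1) : (fF k t).val = fcyc k t := by
  have := (f_spec k t hk ht).1
  simp only [fF]
  omega

/-- stmt3 -/
theorem stmt3 (k : ℕ) (hk : 2 ≤ k) :
    ∃ (a : Fin (3 * k + 1)) (c : (Gk k).Walk a a), c.IsCycle ∧
      (∀ e ∈ heavyEdges k, e ∈ c.edges) ∧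
      {x | x ∈ c.support} = Set.univ \ {vv k ⟨k - 1, by omega⟩, zv k} := by
  have hadj : ∀ i, i < 3*k-1 → (Gk k).Adj (fF k i) (fF k ((i+1) % (3*k-1))) := by
    intro i hi
    have hm : (i+1) % (3*k-1) < 3*k-1 := Nat.mod_lt _ (by omega)
    have h1 := fF_val k i hk hi
    have h2 := fF_val k _ hk hm
    have h3 := adj_spec k i hk hi
    refine ⟨?_, ?_⟩
    · intro hc
      rw [Fin.ext_iff, h1, h2] at hc
      exact h3.1 hc
    · rw [h1, h2]
      exact h3.2
  have hinj : ∀ i, i < 3*k-1 → ∀ j, j < 3*k-1 → fF k i = fF k j → i = j := by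
    intro i hi j hj hij
    rw [Fin.ext_iff, fF_val k i hk hi, fF_val k j hk hj] at hij
    have gi := (f_spec k i hk hi).2.2.2
    have gj := (f_spec k j hk hj).2.2.2
    rw [← gi, ← gj, hij]
  obtain ⟨c, hcyc, hsup, hedg⟩ :=
    Stmt3Aux.exists_cycle (Gk k) (fF k) (3*k-1) (by omega) hadj hinj
  refine ⟨fF k 0, c, hcyc, ?_, ?_⟩
  · intro e he
    simp only [heavyEdges, Set.mem_setOf_eq] at he
    obtain (⟨i, rfl⟩ | ⟨i, rfl⟩) := he
    · obtain ⟨t, ht, ht1, hv⟩ := heavy_u k i.val hk i.isLt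
      refine (hedg _).2 ⟨t, ht, ?_⟩
      have e1 := fF_val k t hk ht
      have e2 := fF_val k (t+1) hk ht1
      rw [Nat.mod_eq_of_lt ht1]
      rcases hv with ⟨hv1, hv2⟩ | ⟨hv1, hv2⟩
      · rw [show fF k t = xv k i from Fin.ext (by rw [e1, hv1]; rfl),
          show fF k (t+1) = uv k i from Fin.ext (by rw [e2, hv2]; rfl)]
      · rw [show fF k t = uv k i from Fin.ext (by rw [e1, hv1]; rfl),
          show fF k (t+1) = xv k i from Fin.ext (by rw [e2, hv2]; rfl)]
        exact Sym2.eq_swap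
    · have hik : i.val < k - 1 := i.isLt
      obtain ⟨t, ht, ht1, hv⟩ := heavy_v k i.val hk hik
      refine (hedg _).2 ⟨t, ht, ?_⟩
      have e1 := fF_val k t hk ht
      have e2 := fF_val k (t+1) hk ht1
      rw [Nat.mod_eq_of_lt ht1]
      rcases hv with ⟨hv1, hv2⟩ | ⟨hv1, hv2⟩
      · rw [show fF k t = xv k (i.castLE (Nat.sub_le k 1)) from
            Fin.ext (by rw [e1, hv1]; rfl),
          show fF k (t+1) = vv k (i.castLE (Nat.sub_le k 1)) from
            Fin.ext (by rw [e2, hv2]; rfl)]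
      · rw [show fF k t = vv k (i.castLE (Nat.sub_le k 1)) from
            Fin.ext (by rw [e1, hv1]; rfl),
          show fF k (t+1) = xv k (i.castLE (Nat.sub_le k 1)) from
            Fin.ext (by rw [e2, hv2]; rfl)]
        exact Sym2.eq_swap
  · ext x
    simp only [Set.mem_setOf_eq, Set.mem_diff, Set.mem_univ, true_and,
      Set.mem_insert_iff, Set.mem_singleton_iff]
    rw [hsup x]
    have hvv : (vv k ⟨k - 1, by omega⟩ : Fin (3*k+1)).val = 2*k+1 := by
      simp only [vv]
      omega
    have hzv : (zv k : Fin (3*k+1)).val = 2*k := rfl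
    constructor
    · rintro ⟨t, ht, rfl⟩
      have hs := f_spec k t hk ht
      have e1 := fF_val k t hk ht
      push_neg
      constructor
      · intro hc
        rw [Fin.ext_iff, e1, hvv] at hc
        exact hs.2.2.1 hc
      · intro hc
        rw [Fin.ext_iff, e1, hzv] at hc
        exact hs.2.1 hc
    · intro hx
      push_neg at hx
      have hx1 : x.val ≠ 2*k+1 := by
        intro h
        exact hx.1 (Fin.ext (by rw [h, hvv]))
      have hx2 : x.val ≠ 2*k := by
        intro h
        exact hx.2 (Fin.ext (by rw [h, hzv]))
      have hg := g_spec k x.val hk (by have := x.isLt; omega) hx2 hx1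
      exact ⟨gcyc k x.val, hg.1, Fin.ext (by rw [fF_val k _ hk hg.1, hg.2])⟩
end

section
/- For every k ≥ 3, the graph G_k = K_k ∨ P_{2k+1} contains no heavy cycle whose vertex set is V(G_k) \ {z}, and no heavy cycle whose vertex set is V(G_k) \ {v_k}. -/
open SimpleGraph


private lemma getVert_getD {V : Type*} {G : SimpleGraph V} {u w : V} (p : G.Walk u w) :
    ∀ i, i ≤ p.length → ∀ d, p.getVert i = p.support.getD i d := by
  induction p with
  | nil =>
    intro i hi d
    simp only [Walk.length_nil, Nat.le_zero] at hi
    subst hi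
    simp [Walk.getVert]
  | cons h q ih =>
    intro i hi d
    cases i with
    | zero => simp
    | succ n =>
      rw [Walk.getVert_cons_succ, Walk.support_cons, List.getD_cons_succ]
      exact ih n (by simpa using hi) d

private lemma cycle_nbrs_start {V : Type*} [DecidableEq V] {G : SimpleGraph V} {v : V}
    {c : G.Walk v v} (hc : c.IsCycle) :
    ∃ x y, x ≠ y ∧ c.toSubgraph.Adj v x ∧ c.toSubgraph.Adj v y ∧
      ∀ t, c.toSubgraph.Adj v t → t = x ∨ t = y := by
  have hn := hc.three_le_length
  have hlen : c.support.length = c.length + 1 := Walk.length_support c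
  have htail : c.support.tail.Nodup := hc.support_nodup
  have htl : c.support.tail.length = c.length := by
    have := congrArg List.length (Walk.support_eq_cons c)
    simp only [List.length_cons] at this
    omega
  have hinj : ∀ i j, 1 ≤ i → i ≤ c.length → 1 ≤ j → j ≤ c.length →
      c.getVert i = c.getVert j → i = j := by
    intro i j hi1 hi2 hj1 hj2 hij
    obtain ⟨i', rfl⟩ : ∃ i', i = i' + 1 := ⟨i - 1, by omega⟩
    obtain ⟨j', rfl⟩ : ∃ j', j = j' + 1 := ⟨j - 1, by omega⟩
    have hi' : i' < c.support.tail.length := by omega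
    have hj' : j' < c.support.tail.length := by omega
    rw [getVert_getD c _ hi2 v, getVert_getD c _ hj2 v, Walk.support_eq_cons,
      List.getD_cons_succ, List.getD_cons_succ, List.getD_eq_getElem _ _ hi',
      List.getD_eq_getElem _ _ hj'] at hij
    have := (htail.getElem_inj_iff).mp hij
    omega
  refine ⟨c.getVert 1, c.getVert (c.length - 1), ?_, ?_, ?_, ?_⟩
  · intro h
    have := hinj 1 (c.length - 1) (by omega) (by omega) (by omega) (by omega) h
    omega
  · have := c.toSubgraph_adj_getVert (show 0 < c.length by omega)
    rwa [Walk.getVert_zero] at this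
  · have := c.toSubgraph_adj_getVert (show c.length - 1 < c.length by omega)
    rw [show c.length - 1 + 1 = c.length by omega, Walk.getVert_length] at this
    exact this.symm
  · intro t ht
    rw [Walk.toSubgraph_adj_iff] at ht
    obtain ⟨i, hi, hil⟩ := ht
    rw [Sym2.eq_iff] at hi
    rcases hi with ⟨h1, h2⟩ | ⟨h1, h2⟩
    · by_cases h0 : i = 0
      · left; rw [← h2, h0]
      · exfalso
        have hv : c.getVert c.length = v := Walk.getVert_length c
        have := hinj i c.length (by omega) (by omega) (by omega) (by omega)
          (by rw [h1, hv])
        omega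
    · right
      have hv : c.getVert c.length = v := Walk.getVert_length c
      have := hinj (i + 1) c.length (by omega) (by omega) (by omega) (by omega)
        (by rw [h2, hv])
      rw [← h1, show i = c.length - 1 by omega]

private lemma cycle_nbrs {V : Type*} [DecidableEq V] {G : SimpleGraph V} {a v : V}
    {c : G.Walk a a} (hc : c.IsCycle) (hv : v ∈ c.support) :
    ∃ x y, x ≠ y ∧ c.toSubgraph.Adj v x ∧ c.toSubgraph.Adj v y ∧
      ∀ t, c.toSubgraph.Adj v t → t = x ∨ t = y := by
  have h := cycle_nbrs_start (hc.rotate hv)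
  rwa [Walk.toSubgraph_rotate] at h

private lemma uniq_lemma {V : Type*} [DecidableEq V] {G : SimpleGraph V} {a : V}
    {c : G.Walk a a} (hc : c.IsCycle) {v p q : V}
    (h1 : c.toSubgraph.Adj v p) (h2 : c.toSubgraph.Adj v q) (hpq : p ≠ q) :
    ∀ t, c.toSubgraph.Adj v t → t = p ∨ t = q := by
  have hv : v ∈ c.support := (c.mem_verts_toSubgraph).mp h1.fst_mem
  obtain ⟨x, y, hxy, hax, hay, hu⟩ := cycle_nbrs hc hv
  intro t ht
  rcases hu p h1 with rfl | rfl <;> rcases hu q h2 with rfl | rfl <;>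
    rcases hu t ht with rfl | rfl <;> tauto

private lemma force_lemma {V : Type*} [DecidableEq V] {G : SimpleGraph V} {a : V}
    {c : G.Walk a a} (hc : c.IsCycle) {v p q : V} (hv : v ∈ c.support) (hpq : p ≠ q)
    (hcand : ∀ t, c.toSubgraph.Adj v t → t = p ∨ t = q) :
    c.toSubgraph.Adj v p ∧ c.toSubgraph.Adj v q := by
  obtain ⟨x, y, hxy, hax, hay, hu⟩ := cycle_nbrs hc hv
  rcases hcand x hax with rfl | rfl <;> rcases hcand y hay with rfl | rfl <;>
    first
      | exact ⟨hax, hay⟩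
      | exact ⟨hay, hax⟩
      | exact absurd rfl hxy

private lemma walk_closed {V : Type*} {G : SimpleGraph V} {H : G.Subgraph} {S : Set V}
    (hS : ∀ p ∈ S, ∀ t, H.Adj p t → t ∈ S) :
    ∀ {x y : H.verts} (w : H.coe.Walk x y), x.val ∈ S → y.val ∈ S := by
  intro x y w
  induction w with
  | nil => exact id
  | cons h p ih =>
    intro hx
    exact ih (hS _ hx _ (by exact h))

private lemma fin_val_mk {n a : ℕ} (h : a < n) : (⟨a, h⟩ : Fin n).val = a := rfl




/-- stmt4 -/
theorem stmt4 (k : ℕ) (hk : 3 ≤ k) :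
    ¬ ∃ (a : Fin (3 * k + 1)) (c : (Gk k).Walk a a), c.IsCycle ∧
      (∀ e ∈ heavyEdges k, e ∈ c.edges) ∧
      ({x | x ∈ c.support} = Set.univ \ {zv k} ∨
        {x | x ∈ c.support} = Set.univ \ {vv k ⟨k - 1, by omega⟩}) := by
  rintro ⟨a, c, hcyc, hheavy, hsupp⟩
  have hedge : ∀ u v : Fin (3*k+1), s(u,v) ∈ c.edges → c.toSubgraph.Adj u v := by
    intro u v h
    rw [← SimpleGraph.Subgraph.mem_edgeSet, Walk.mem_edges_toSubgraph]
    exact h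
  have hXU : ∀ i : Fin k, c.toSubgraph.Adj (xv k i) (uv k i) :=
    fun i => hedge _ _ (hheavy _ (Or.inl ⟨i, rfl⟩))
  have hXV : ∀ i : Fin (k-1), c.toSubgraph.Adj (xv k (i.castLE (Nat.sub_le k 1)))
      (vv k (i.castLE (Nat.sub_le k 1))) :=
    fun i => hedge _ _ (hheavy _ (Or.inr ⟨i, rfl⟩))
  have hxadj : ∀ m : ℕ, ∀ _ : m ≤ k - 2,
      c.toSubgraph.Adj ⟨m, by omega⟩ ⟨k + m, by omega⟩ ∧
      c.toSubgraph.Adj ⟨m, by omega⟩ ⟨3*k - m, by omega⟩ := by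
    intro m hm
    exact ⟨hXU ⟨m, by omega⟩, hXV ⟨m, by omega⟩⟩
  have huniqX : ∀ m : ℕ, ∀ _ : m ≤ k - 2, ∀ t, c.toSubgraph.Adj ⟨m, by omega⟩ t →
      t.val = k + m ∨ t.val = 3*k - m := by
    intro m hm t ht
    obtain ⟨h1, h2⟩ := hxadj m hm
    have hne : (⟨k + m, by omega⟩ : Fin (3*k+1)) ≠ ⟨3*k - m, by omega⟩ := by
      simp only [ne_eq, Fin.mk.injEq]; omega
    rcases uniq_lemma hcyc h1 h2 hne t ht with rfl | rfl
    · left; rfl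
    · right; rfl
  have hfacts : ∀ u t : Fin (3*k+1), c.toSubgraph.Adj u t →
      u.val ≠ t.val ∧ (u.val < k ∨ t.val < k ∨ u.val + 1 = t.val ∨ t.val + 1 = u.val) := by
    intro u t h
    have hg : (Gk k).Adj u t := c.toSubgraph.adj_sub h
    exact ⟨fun hv => hg.1 (Fin.ext hv), hg.2⟩
  have hsupadj : ∀ u t : Fin (3*k+1), c.toSubgraph.Adj u t → u ∈ c.support :=
    fun u t h => (c.mem_verts_toSubgraph).mp h.fst_mem
  have hreach : ∀ S : Set (Fin (3*k+1)),
      (∀ p ∈ S, ∀ t, c.toSubgraph.Adj p t → t ∈ S) →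
      ∀ b1 b2 : Fin (3*k+1), b1 ∈ c.support → b2 ∈ c.support → b1 ∈ S → b2 ∈ S := by
    intro S hS b1 b2 h1 h2 hb1
    have hconn := c.toSubgraph_connected
    obtain ⟨w⟩ := hconn ⟨b1, (c.mem_verts_toSubgraph).mpr h1⟩ ⟨b2, (c.mem_verts_toSubgraph).mpr h2⟩
    exact walk_closed hS w hb1
  have hxk1u : c.toSubgraph.Adj ⟨k-1, by omega⟩ ⟨2*k-1, by omega⟩ := by
    have h := hXU ⟨k-1, by omega⟩
    have e : (uv k ⟨k-1, by omega⟩) = (⟨2*k-1, by omega⟩ : Fin (3*k+1)) :=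
      Fin.ext (by show k + (k-1) = 2*k-1; omega)
    have e2 : (xv k ⟨k-1, by omega⟩) = (⟨k-1, by omega⟩ : Fin (3*k+1)) := Fin.ext rfl
    rw [e, e2] at h
    exact h
  rcases hsupp with hs | hs
  · -- missing vertex z = 2k
    have hmem : ∀ t : Fin (3*k+1), t.val ≠ 2*k → t ∈ c.support := by
      intro t ht
      have h := Set.ext_iff.mp hs t
      simp only [Set.mem_setOf_eq, Set.mem_diff, Set.mem_univ, Set.mem_singleton_iff,
        true_and] at h
      exact h.mpr (fun hh => ht (by rw [hh]; rfl))
    have hmem' : ∀ t : Fin (3*k+1), t ∈ c.support → t.val ≠ 2*k := by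
      intro t ht hv
      have h := Set.ext_iff.mp hs t
      simp only [Set.mem_setOf_eq, Set.mem_diff, Set.mem_univ, Set.mem_singleton_iff,
        true_and] at h
      exact (h.mp ht) (Fin.ext hv)
    -- vertex 2k+1 : candidates are k-1 and 2k+2
    have cand1 : ∀ t, c.toSubgraph.Adj ⟨2*k+1, by omega⟩ t →
        t = (⟨k-1, by omega⟩ : Fin (3*k+1)) ∨ t = ⟨2*k+2, by omega⟩ := by
      intro t ht
      obtain ⟨hne, hor⟩ := hfacts _ _ ht
      have ht2 : t.val ≠ 2*k := hmem' t (hsupadj _ _ ht.symm)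
      have hlt : t.val < 3*k+1 := t.isLt
      simp only [fin_val_mk] at hne hor
      by_cases hsm : t.val ≤ k - 2
      · exfalso
        have h2 := huniqX t.val hsm ⟨2*k+1, by omega⟩ ht.symm
        simp only [fin_val_mk] at h2
        omega
      · by_cases hk1 : t.val = k - 1
        · left; exact Fin.ext (by simp only [fin_val_mk]; omega)
        · right; exact Fin.ext (by simp only [fin_val_mk]; omega)
    have hforce1 := force_lemma hcyc (hmem ⟨2*k+1, by omega⟩ (by show 2*k+1 ≠ 2*k; omega))
      (show (⟨k-1, by omega⟩ : Fin (3*k+1)) ≠ ⟨2*k+2, by omega⟩ by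
        simp only [ne_eq, Fin.mk.injEq]; omega) cand1
    -- uniqueness at x_{k-1}
    have uniqXk1 : ∀ t, c.toSubgraph.Adj ⟨k-1, by omega⟩ t →
        t.val = 2*k-1 ∨ t.val = 2*k+1 := by
      intro t ht
      have hne : (⟨2*k-1, by omega⟩ : Fin (3*k+1)) ≠ ⟨2*k+1, by omega⟩ := by
        simp only [ne_eq, Fin.mk.injEq]; omega
      rcases uniq_lemma hcyc hxk1u hforce1.1.symm hne t ht with rfl | rfl
      · left; rfl
      · right; rfl
    -- vertex u0 = k : candidates are 0 and k+1
    have candU0 : ∀ t, c.toSubgraph.Adj ⟨k, by omega⟩ t →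
        t = (⟨0, by omega⟩ : Fin (3*k+1)) ∨ t = ⟨k+1, by omega⟩ := by
      intro t ht
      obtain ⟨hne, hor⟩ := hfacts _ _ ht
      have ht2 : t.val ≠ 2*k := hmem' t (hsupadj _ _ ht.symm)
      have hlt : t.val < 3*k+1 := t.isLt
      simp only [fin_val_mk] at hne hor
      by_cases hsm : t.val ≤ k - 2
      · have h2 := huniqX t.val hsm ⟨k, by omega⟩ ht.symm
        simp only [fin_val_mk] at h2
        left; exact Fin.ext (by simp only [fin_val_mk]; omega)
      · by_cases hk1 : t.val = k - 1
        · exfalso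
          have e : t = (⟨k-1, by omega⟩ : Fin (3*k+1)) :=
            Fin.ext (by simp only [fin_val_mk]; omega)
          rw [e] at ht
          have h2 := uniqXk1 _ ht.symm
          simp only [fin_val_mk] at h2
          omega
        · right; exact Fin.ext (by simp only [fin_val_mk]; omega)
    have hforceU0 := force_lemma hcyc (hmem ⟨k, by omega⟩ (by show k ≠ 2*k; omega))
      (show (⟨0, by omega⟩ : Fin (3*k+1)) ≠ ⟨k+1, by omega⟩ by
        simp only [ne_eq, Fin.mk.injEq]; omega) candU0
    -- vertex v0 = 3k : candidates are 0 and 3k-1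
    have candV0 : ∀ t, c.toSubgraph.Adj ⟨3*k, by omega⟩ t →
        t = (⟨0, by omega⟩ : Fin (3*k+1)) ∨ t = ⟨3*k-1, by omega⟩ := by
      intro t ht
      obtain ⟨hne, hor⟩ := hfacts _ _ ht
      have ht2 : t.val ≠ 2*k := hmem' t (hsupadj _ _ ht.symm)
      have hlt : t.val < 3*k+1 := t.isLt
      simp only [fin_val_mk] at hne hor
      by_cases hsm : t.val ≤ k - 2
      · have h2 := huniqX t.val hsm ⟨3*k, by omega⟩ ht.symm
        simp only [fin_val_mk] at h2
        left; exact Fin.ext (by simp only [fin_val_mk]; omega)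
      · by_cases hk1 : t.val = k - 1
        · exfalso
          have e : t = (⟨k-1, by omega⟩ : Fin (3*k+1)) :=
            Fin.ext (by simp only [fin_val_mk]; omega)
          rw [e] at ht
          have h2 := uniqXk1 _ ht.symm
          simp only [fin_val_mk] at h2
          omega
        · right; exact Fin.ext (by simp only [fin_val_mk]; omega)
    have hforceV0 := force_lemma hcyc (hmem ⟨3*k, by omega⟩ (by show 3*k ≠ 2*k; omega))
      (show (⟨0, by omega⟩ : Fin (3*k+1)) ≠ ⟨3*k-1, by omega⟩ by
        simp only [ne_eq, Fin.mk.injEq]; omega) candV0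
    -- uniqueness at u1 = k+1
    have uniqU1 : ∀ t, c.toSubgraph.Adj ⟨k+1, by omega⟩ t →
        t.val = 1 ∨ t.val = k := by
      intro t ht
      have h1 : c.toSubgraph.Adj ⟨k+1, by omega⟩ ⟨1, by omega⟩ := (hxadj 1 (by omega)).1.symm
      have h2 : c.toSubgraph.Adj ⟨k+1, by omega⟩ ⟨k, by omega⟩ := hforceU0.2.symm
      have hne : (⟨1, by omega⟩ : Fin (3*k+1)) ≠ ⟨k, by omega⟩ := by
        simp only [ne_eq, Fin.mk.injEq]; omega
      rcases uniq_lemma hcyc h1 h2 hne t ht with rfl | rfl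
      · left; rfl
      · right; rfl
    -- uniqueness at v1 = 3k-1
    have uniqV1 : ∀ t, c.toSubgraph.Adj ⟨3*k-1, by omega⟩ t →
        t.val = 1 ∨ t.val = 3*k := by
      intro t ht
      have h1 : c.toSubgraph.Adj ⟨3*k-1, by omega⟩ ⟨1, by omega⟩ := (hxadj 1 (by omega)).2.symm
      have h2 : c.toSubgraph.Adj ⟨3*k-1, by omega⟩ ⟨3*k, by omega⟩ := hforceV0.2.symm
      have hne : (⟨1, by omega⟩ : Fin (3*k+1)) ≠ ⟨3*k, by omega⟩ := by
        simp only [ne_eq, Fin.mk.injEq]; omega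
      rcases uniq_lemma hcyc h1 h2 hne t ht with rfl | rfl
      · left; rfl
      · right; rfl
    -- closed set
    have hclosed : ∀ p ∈ {p : Fin (3*k+1) | p.val = 0 ∨ p.val = 1 ∨ p.val = k ∨
        p.val = k+1 ∨ p.val = 3*k-1 ∨ p.val = 3*k}, ∀ t, c.toSubgraph.Adj p t →
        t ∈ {p : Fin (3*k+1) | p.val = 0 ∨ p.val = 1 ∨ p.val = k ∨
        p.val = k+1 ∨ p.val = 3*k-1 ∨ p.val = 3*k} := by
      intro p hp t ht
      simp only [Set.mem_setOf_eq] at hp ⊢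
      rcases hp with h|h|h|h|h|h
      · have e : p = (⟨0, by omega⟩ : Fin (3*k+1)) := Fin.ext (by simp only [fin_val_mk]; omega)
        rw [e] at ht
        have h2 := huniqX 0 (by omega) t ht
        omega
      · have e : p = (⟨1, by omega⟩ : Fin (3*k+1)) := Fin.ext (by simp only [fin_val_mk]; omega)
        rw [e] at ht
        have h2 := huniqX 1 (by omega) t ht
        omega
      · have e : p = (⟨k, by omega⟩ : Fin (3*k+1)) := Fin.ext (by simp only [fin_val_mk]; omega)
        rw [e] at ht
        rcases candU0 t ht with rfl | rfl
        · left; rfl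
        · right; right; right; left; rfl
      · have e : p = (⟨k+1, by omega⟩ : Fin (3*k+1)) := Fin.ext (by simp only [fin_val_mk]; omega)
        rw [e] at ht
        have h2 := uniqU1 t ht
        omega
      · have e : p = (⟨3*k-1, by omega⟩ : Fin (3*k+1)) := Fin.ext (by simp only [fin_val_mk]; omega)
        rw [e] at ht
        have h2 := uniqV1 t ht
        omega
      · have e : p = (⟨3*k, by omega⟩ : Fin (3*k+1)) := Fin.ext (by simp only [fin_val_mk]; omega)
        rw [e] at ht
        rcases candV0 t ht with rfl | rfl
        · left; rfl
        · right; right; right; right; left; rfl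
    have hb := hreach _ hclosed ⟨0, by omega⟩ ⟨2*k-1, by omega⟩
      (hmem _ (by show (0:ℕ) ≠ 2*k; omega)) (hmem _ (by show 2*k-1 ≠ 2*k; omega))
      (by exact Or.inl rfl)
    simp only [Set.mem_setOf_eq, fin_val_mk] at hb
    omega
  · -- missing vertex v_k = 2k+1
    have hval : (vv k ⟨k - 1, by omega⟩).val = 3*k - (k-1) := rfl
    have hmem : ∀ t : Fin (3*k+1), t.val ≠ 2*k+1 → t ∈ c.support := by
      intro t ht
      have h := Set.ext_iff.mp hs t
      simp only [Set.mem_setOf_eq, Set.mem_diff, Set.mem_univ, Set.mem_singleton_iff,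
        true_and] at h
      exact h.mpr (fun hh => ht (by rw [hh, hval]; omega))
    have hmem' : ∀ t : Fin (3*k+1), t ∈ c.support → t.val ≠ 2*k+1 := by
      intro t ht hv
      have h := Set.ext_iff.mp hs t
      simp only [Set.mem_setOf_eq, Set.mem_diff, Set.mem_univ, Set.mem_singleton_iff,
        true_and] at h
      exact (h.mp ht) (Fin.ext (by rw [hval]; omega))
    -- vertex z = 2k : candidates are k-1 and 2k-1
    have candZ : ∀ t, c.toSubgraph.Adj ⟨2*k, by omega⟩ t →
        t = (⟨k-1, by omega⟩ : Fin (3*k+1)) ∨ t = ⟨2*k-1, by omega⟩ := by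
      intro t ht
      obtain ⟨hne, hor⟩ := hfacts _ _ ht
      have ht2 : t.val ≠ 2*k+1 := hmem' t (hsupadj _ _ ht.symm)
      have hlt : t.val < 3*k+1 := t.isLt
      simp only [fin_val_mk] at hne hor
      by_cases hsm : t.val ≤ k - 2
      · exfalso
        have h2 := huniqX t.val hsm ⟨2*k, by omega⟩ ht.symm
        simp only [fin_val_mk] at h2
        omega
      · by_cases hk1 : t.val = k - 1
        · left; exact Fin.ext (by simp only [fin_val_mk]; omega)
        · right; exact Fin.ext (by simp only [fin_val_mk]; omega)
    have hforceZ := force_lemma hcyc (hmem ⟨2*k, by omega⟩ (by show 2*k ≠ 2*k+1; omega))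
      (show (⟨k-1, by omega⟩ : Fin (3*k+1)) ≠ ⟨2*k-1, by omega⟩ by
        simp only [ne_eq, Fin.mk.injEq]; omega) candZ
    -- uniqueness at x_{k-1}
    have uniqXk1 : ∀ t, c.toSubgraph.Adj ⟨k-1, by omega⟩ t →
        t.val = 2*k-1 ∨ t.val = 2*k := by
      intro t ht
      have hne : (⟨2*k-1, by omega⟩ : Fin (3*k+1)) ≠ ⟨2*k, by omega⟩ := by
        simp only [ne_eq, Fin.mk.injEq]; omega
      rcases uniq_lemma hcyc hxk1u hforceZ.1.symm hne t ht with rfl | rfl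
      · left; rfl
      · right; rfl
    -- uniqueness at 2k-1
    have uniqW : ∀ t, c.toSubgraph.Adj ⟨2*k-1, by omega⟩ t →
        t.val = k-1 ∨ t.val = 2*k := by
      intro t ht
      have h1 : c.toSubgraph.Adj ⟨2*k-1, by omega⟩ ⟨k-1, by omega⟩ := hxk1u.symm
      have h2 : c.toSubgraph.Adj ⟨2*k-1, by omega⟩ ⟨2*k, by omega⟩ := hforceZ.2.symm
      have hne : (⟨k-1, by omega⟩ : Fin (3*k+1)) ≠ ⟨2*k, by omega⟩ := by
        simp only [ne_eq, Fin.mk.injEq]; omega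
      rcases uniq_lemma hcyc h1 h2 hne t ht with rfl | rfl
      · left; rfl
      · right; rfl
    have hclosed : ∀ p ∈ {p : Fin (3*k+1) | p.val = k-1 ∨ p.val = 2*k-1 ∨ p.val = 2*k},
        ∀ t, c.toSubgraph.Adj p t →
        t ∈ {p : Fin (3*k+1) | p.val = k-1 ∨ p.val = 2*k-1 ∨ p.val = 2*k} := by
      intro p hp t ht
      simp only [Set.mem_setOf_eq] at hp ⊢
      rcases hp with h|h|h
      · have e : p = (⟨k-1, by omega⟩ : Fin (3*k+1)) := Fin.ext (by simp only [fin_val_mk]; omega)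
        rw [e] at ht
        have h2 := uniqXk1 t ht
        omega
      · have e : p = (⟨2*k-1, by omega⟩ : Fin (3*k+1)) := Fin.ext (by simp only [fin_val_mk]; omega)
        rw [e] at ht
        have h2 := uniqW t ht
        omega
      · have e : p = (⟨2*k, by omega⟩ : Fin (3*k+1)) := Fin.ext (by simp only [fin_val_mk]; omega)
        rw [e] at ht
        rcases candZ t ht with rfl | rfl
        · left; rfl
        · right; left; rfl
    have hb := hreach _ hclosed ⟨k-1, by omega⟩ ⟨0, by omega⟩
      (hmem _ (by show k-1 ≠ 2*k+1; omega)) (hmem _ (by show (0:ℕ) ≠ 2*k+1; omega))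
      (by exact Or.inl rfl)
    simp only [Set.mem_setOf_eq, fin_val_mk] at hb
    omega
end

section
/- The graph G_3 + u_1u_3 (the join K_3 ∨ P_7 with the extra edge u_1u_3) has no induced path on more than 6 vertices; its longest induced path is u_1, u_3, z, v_3, v_2, v_1. -/
/-- The graph `G_3 + u_1u_3`. -/
def G3plus : SimpleGraph (Fin (3 * 3 + 1)) :=
  Gk 3 ⊔ SimpleGraph.fromEdgeSet {s(uv 3 0, uv 3 2)}

instance : DecidableRel (Gk 3).Adj := fun a b =>
  inferInstanceAs (Decidable (a ≠ b ∧ (a.val < 3 ∨ b.val < 3 ∨ a.val + 1 = b.val ∨ b.val + 1 = a.val)))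

instance : DecidableRel G3plus.Adj := fun a b =>
  decidable_of_iff ((Gk 3).Adj a b ∨ (s(a, b) = s(uv 3 0, uv 3 2) ∧ a ≠ b)) (by
    rw [G3plus, SimpleGraph.sup_adj, SimpleGraph.fromEdgeSet_adj, Set.mem_singleton_iff])

lemma path7_no_triangle : ∀ x y z : Fin 7, (SimpleGraph.pathGraph 7).Adj x y →
    (SimpleGraph.pathGraph 7).Adj y z → (SimpleGraph.pathGraph 7).Adj x z → False := by
  intro x y z
  simp only [SimpleGraph.pathGraph_adj]
  omega

lemma path7_nonnbr : ∀ i : Fin 7, ∃ j : Fin 7, j ≠ i ∧ ¬ (SimpleGraph.pathGraph 7).Adj i j := by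
  intro i
  refine ⟨⟨(i.val + 3) % 7, by omega⟩, ?_, ?_⟩
  · intro h
    have := congrArg Fin.val h
    simp only at this
    omega
  · simp only [SimpleGraph.pathGraph_adj]
    omega

lemma no_path7 : IsEmpty (SimpleGraph.pathGraph 7 ↪g G3plus) := by
  constructor
  intro g
  -- step 1: image avoids universal vertices 0,1,2
  have h3 : ∀ i : Fin 7, 3 ≤ (g i).val := by
    intro i
    by_contra hlt
    push_neg at hlt
    obtain ⟨j, hji, hnadj⟩ := path7_nonnbr i
    apply hnadj
    rw [← g.map_rel_iff]
    refine (SimpleGraph.sup_adj _ _ _ _).mpr (Or.inl ⟨?_, Or.inl hlt⟩)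
    exact fun h => hji (g.injective h).symm
  -- step 2: the map onto {3,...,9} is surjective
  set F : Fin 7 → Fin 7 := fun i => ⟨(g i).val - 3, by have := (g i).isLt; have := h3 i; omega⟩ with hF
  have Finj : Function.Injective F := by
    intro a b hab
    have h1 := congrArg Fin.val hab
    simp only [hF] at h1
    have ha := h3 a; have hb := h3 b
    exact g.injective (Fin.ext (by omega))
  have Fsurj := Finite.injective_iff_surjective.mp Finj
  obtain ⟨a, ha⟩ := Fsurj ⟨0, by omega⟩
  obtain ⟨b, hb⟩ := Fsurj ⟨1, by omega⟩
  obtain ⟨c, hc⟩ := Fsurj ⟨2, by omega⟩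
  have hva : (g a).val = 3 := by have := congrArg Fin.val ha; simp only [hF] at this; have := h3 a; omega
  have hvb : (g b).val = 4 := by have := congrArg Fin.val hb; simp only [hF] at this; have := h3 b; omega
  have hvc : (g c).val = 5 := by have := congrArg Fin.val hc; simp only [hF] at this; have := h3 c; omega
  have pab : (SimpleGraph.pathGraph 7).Adj a b := by
    rw [← g.map_rel_iff]
    exact (SimpleGraph.sup_adj _ _ _ _).mpr (Or.inl
      ⟨fun h => by rw [h, hvb] at hva; omega, Or.inr (Or.inr (Or.inl (by omega)))⟩)
  have pbc : (SimpleGraph.pathGraph 7).Adj b c := by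
    rw [← g.map_rel_iff]
    exact (SimpleGraph.sup_adj _ _ _ _).mpr (Or.inl
      ⟨fun h => by rw [h, hvc] at hvb; omega, Or.inr (Or.inr (Or.inl (by omega)))⟩)
  have pac : (SimpleGraph.pathGraph 7).Adj a c := by
    rw [← g.map_rel_iff]
    refine (SimpleGraph.sup_adj _ _ _ _).mpr (Or.inr ?_)
    rw [SimpleGraph.fromEdgeSet_adj, Set.mem_singleton_iff]
    constructor
    · have e1 : g a = uv 3 0 := Fin.ext (by rw [hva]; decide)
      have e2 : g c = uv 3 2 := Fin.ext (by rw [hvc]; decide)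
      rw [e1, e2]
    · intro h; rw [h, hvc] at hva; omega
  exact path7_no_triangle a b c pab pbc pac

def incl7 {n : ℕ} (h : 7 ≤ n) : SimpleGraph.pathGraph 7 ↪g SimpleGraph.pathGraph n where
  toFun i := ⟨i.val, lt_of_lt_of_le i.isLt h⟩
  inj' := by intro a b hab; simp only [Fin.mk.injEq] at hab; exact Fin.ext hab
  map_rel_iff' := by
    intro a b
    simp only [SimpleGraph.pathGraph_adj, Function.Embedding.coeFn_mk]
    exact Iff.rfl

def e6 : SimpleGraph.pathGraph 6 ↪g G3plus where
  toFun := ![3, 5, 6, 7, 8, 9]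
  inj' := by decide
  map_rel_iff' := by
    intro a b
    rw [SimpleGraph.pathGraph_adj]
    revert a b
    decide

/-- stmt9: `G_3 + u_1u_3` has no induced path on more than 6 vertices, and
`u_1, u_3, z, v_3, v_2, v_1` is an induced path on 6 vertices. -/
theorem stmt9 :
    (∀ n, 7 ≤ n → IsEmpty (SimpleGraph.pathGraph n ↪g G3plus)) ∧
      ∃ e : SimpleGraph.pathGraph 6 ↪g G3plus,
        e 0 = uv 3 0 ∧ e 1 = uv 3 2 ∧ e 2 = zv 3 ∧
          e 3 = vv 3 2 ∧ e 4 = vv 3 1 ∧ e 5 = vv 3 0 := by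
  constructor
  · intro n hn
    constructor
    intro g
    exact no_path7.false (g.comp (incl7 hn))
  · exact ⟨e6, by decide⟩
end
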